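/- arXiv:0903.2647 — 5 statements merged into one kernel-verified Lean document; each statement's English description precedes it below -/
import Mathlib

section
/- For every integer p ≥ 0 there exists a unique function of the form Λ_p(u) = α_0 u + α_1 + α_2/u + ... + α_{p-1}/u^{p-2} − 1/u^{p-1} (a Laurent polynomial in u with highest-order pole −u^{1-p} having coefficient −1 and top degree 1) such that the function z ↦ z^{1−p} f'(z) + Λ_p(f(z)) has a power series expansion at z = 0 containing only powers z^k with k ≥ 2. -/
open Topology Filter Metric Set Asymptotics


section helpers

lemma my_dslope_mul {f : ℂ → ℂ} (hf0 : f 0 = 0) (z : ℂ) :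
    f z = z * dslope f 0 z := by
  have h := sub_smul_dslope f 0 z
  rw [hf0, sub_zero, sub_zero, smul_eq_mul] at h
  exact h.symm

lemma my_analyticAt_dslope {f : ℂ → ℂ} {z₀ : ℂ} (hf : AnalyticAt ℂ f z₀) :
    AnalyticAt ℂ (dslope f z₀) z₀ := by
  obtain ⟨p, hp⟩ := hf
  exact ⟨p.fslope, hp.has_fpower_series_dslope_fslope⟩

end helpers

lemma my_pow_factor : ∀ (n : ℕ) (D : ℂ → ℂ), AnalyticAt ℂ D 0 →
    D =O[𝓝[≠] (0:ℂ)] (fun z => z ^ n) →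
    ∃ h : ℂ → ℂ, AnalyticAt ℂ h 0 ∧ ∀ z, D z = z ^ n * h z := by
  intro n
  induction n with
  | zero => exact fun D hD _ => ⟨D, hD, fun z => by simp⟩
  | succ n ih =>
    intro D hD hO
    have hD0 : D 0 = 0 := by
      have h1 : Tendsto D (𝓝[≠] (0:ℂ)) (𝓝 (D 0)) :=
        hD.continuousAt.tendsto.mono_left nhdsWithin_le_nhds
      have h2 : Tendsto (fun z : ℂ => z ^ (n+1)) (𝓝[≠] (0:ℂ)) (𝓝 0) := by
        have : Tendsto (fun z : ℂ => z ^ (n+1)) (𝓝 (0:ℂ)) (𝓝 ((0:ℂ) ^ (n+1))) :=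
          (continuous_pow (n+1)).tendsto 0
        simpa using this.mono_left nhdsWithin_le_nhds
      exact tendsto_nhds_unique h1 (hO.trans_tendsto h2)
    have heq : ∀ z, D z = z * dslope D 0 z := my_dslope_mul hD0
    have hO1 : (dslope D 0) =O[𝓝[≠] (0:ℂ)] (fun z => z ^ n) := by
      rw [isBigO_iff] at hO ⊢
      obtain ⟨C, hC⟩ := hO
      refine ⟨C, ?_⟩
      filter_upwards [hC, self_mem_nhdsWithin] with z hz hz0
      have hz0 : z ≠ 0 := hz0
      rw [heq z] at hz
      rw [norm_mul, norm_pow] at hz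
      rw [show ‖z ^ n‖ = ‖z‖ ^ n from norm_pow z n]
      have hzpos : (0:ℝ) < ‖z‖ := norm_pos_iff.mpr hz0
      rw [pow_succ'] at hz
      calc ‖dslope D 0 z‖ = (‖z‖ * ‖dslope D 0 z‖) / ‖z‖ := by
              rw [mul_comm, mul_div_cancel_right₀ _ (ne_of_gt hzpos)]
        _ ≤ (C * (‖z‖ * ‖z‖ ^ n)) / ‖z‖ := by gcongr
        _ = C * ‖z‖ ^ n := by
              rw [mul_comm ‖z‖ (‖z‖ ^ n), ← mul_assoc, mul_div_cancel_right₀ _ (ne_of_gt hzpos)]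
    obtain ⟨h, hh, he⟩ := ih (dslope D 0) (my_analyticAt_dslope hD) hO1
    refine ⟨h, hh, fun z => ?_⟩
    rw [heq z, he z, pow_succ']
    ring

lemma my_exists_cancel : ∀ (q : ℕ) (w : ℂ → ℂ) (vs : ℕ → ℂ → ℂ),
    AnalyticAt ℂ w 0 → w 0 = 0 → (∀ j, AnalyticAt ℂ (vs j) 0) → (∀ j, vs j 0 = 1) →
    ∃ (α : Fin q → ℂ) (h : ℂ → ℂ), AnalyticAt ℂ h 0 ∧
      ∀ z, w z + ∑ j : Fin q, α j * z ^ (q - (j:ℕ)) * vs (j:ℕ) z = z ^ (q+1) * h z := by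
  intro q
  induction q with
  | zero =>
    intro w vs hw hw0 _ _
    refine ⟨0, dslope w 0, my_analyticAt_dslope hw, fun z => ?_⟩
    simp only [Finset.univ_eq_empty, Finset.sum_empty, add_zero, zero_add, pow_one]
    exact my_dslope_mul hw0 z
  | succ q ih =>
    intro w vs hw hw0 hvs hvs0
    have hw₁ : AnalyticAt ℂ (dslope w 0) 0 := my_analyticAt_dslope hw
    set w₁ : ℂ → ℂ := dslope w 0 with hw₁def
    set w' : ℂ → ℂ := fun z => w₁ z + (-(w₁ 0)) * vs q z with hw'def
    have hw' : AnalyticAt ℂ w' 0 := hw₁.add (analyticAt_const.mul (hvs q))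
    have hw'0 : w' 0 = 0 := by simp [hw'def, hvs0 q]
    obtain ⟨α', h, hh, he⟩ := ih w' vs hw' hw'0 hvs hvs0
    refine ⟨Fin.snoc α' (-(w₁ 0)), h, hh, fun z => ?_⟩
    have hs : ∑ i : Fin q, α' i * z ^ (q + 1 - (i:ℕ)) * vs (i:ℕ) z
        = z * ∑ i : Fin q, α' i * z ^ (q - (i:ℕ)) * vs (i:ℕ) z := by
      rw [Finset.mul_sum]
      refine Finset.sum_congr rfl fun i _ => ?_
      rw [Nat.succ_sub (le_of_lt i.isLt), pow_succ]
      ring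
    rw [Fin.sum_univ_castSucc]
    simp only [Fin.snoc_castSucc, Fin.snoc_last, Fin.coe_castSucc, Fin.val_last]
    rw [hs, my_dslope_mul hw0 z, ← hw₁def]
    have hkey := he z
    rw [Nat.add_sub_cancel_left]
    linear_combination z * hkey

lemma my_cancel_unique : ∀ (q : ℕ) (vs : ℕ → ℂ → ℂ),
    (∀ j, AnalyticAt ℂ (vs j) 0) → (∀ j, vs j 0 = 1) →
    ∀ (β : Fin q → ℂ) (h : ℂ → ℂ), AnalyticAt ℂ h 0 →
    (∀ᶠ z in 𝓝 (0:ℂ), ∑ j : Fin q, β j * z ^ (q - (j:ℕ)) * vs (j:ℕ) z = z ^ (q+1) * h z) →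
    β = 0 := by
  intro q
  induction q with
  | zero => intro _ _ _ β _ _ _; exact funext fun i => i.elim0
  | succ q ih =>
    intro vs hvs hvs0 β h hh hev
    set S : ℂ → ℂ := fun z => ∑ j : Fin (q+1), β j * z ^ (q - (j:ℕ)) * vs (j:ℕ) z with hSdef
    have hfact : ∀ z : ℂ, ∑ j : Fin (q+1), β j * z ^ (q + 1 - (j:ℕ)) * vs (j:ℕ) z = z * S z := by
      intro z
      rw [hSdef, Finset.mul_sum]
      refine Finset.sum_congr rfl fun j _ => ?_
      rw [Nat.succ_sub (Nat.lt_succ_iff.mp j.isLt), pow_succ]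
      ring
    have hSpunct : ∀ᶠ z in 𝓝[≠] (0:ℂ), S z = z ^ (q+1) * h z := by
      filter_upwards [hev.filter_mono nhdsWithin_le_nhds, self_mem_nhdsWithin] with z hz hz0
      have hz0 : z ≠ 0 := hz0
      rw [hfact z] at hz
      have : z * S z = z * (z ^ (q+1) * h z) := by rw [hz]; ring
      exact mul_left_cancel₀ hz0 this
    -- limit of S along punctured nbhd
    have hlim1 : Tendsto S (𝓝[≠] (0:ℂ)) (𝓝 (β (Fin.last q))) := by
      have hterm : ∀ j : Fin (q+1), Tendsto (fun z : ℂ => β j * z ^ (q - (j:ℕ)) * vs (j:ℕ) z)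
          (𝓝 0) (𝓝 (β j * (0:ℂ) ^ (q - (j:ℕ)) * vs (j:ℕ) 0)) := fun j =>
        ((tendsto_const_nhds.mul ((continuous_pow _).tendsto 0)).mul ((hvs j).continuousAt))
      have hsum := tendsto_finset_sum Finset.univ (fun j (_ : j ∈ Finset.univ) => hterm j)
      have hval : ∑ j : Fin (q+1), β j * (0:ℂ) ^ (q - (j:ℕ)) * vs (j:ℕ) 0 = β (Fin.last q) := by
        rw [Fin.sum_univ_castSucc]
        have hz : ∀ i : Fin q,
            β i.castSucc * (0:ℂ) ^ (q - ((i.castSucc : Fin (q+1)):ℕ)) * vs ((i.castSucc : Fin (q+1)):ℕ) 0 = 0 := by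
          intro i
          rw [Fin.coe_castSucc, zero_pow (Nat.sub_ne_zero_of_lt i.isLt)]
          ring
        rw [Finset.sum_congr rfl (fun i _ => hz i), Finset.sum_const_zero, zero_add,
          Fin.val_last, Nat.sub_self, pow_zero, hvs0 q]
        ring
      rw [hval] at hsum
      exact hsum.mono_left nhdsWithin_le_nhds
    have hlim2 : Tendsto S (𝓝[≠] (0:ℂ)) (𝓝 0) := by
      have : Tendsto (fun z : ℂ => z ^ (q+1) * h z) (𝓝 0) (𝓝 ((0:ℂ) ^ (q+1) * h 0)) :=
        ((continuous_pow (q+1)).tendsto 0).mul hh.continuousAt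
      rw [zero_pow (Nat.succ_ne_zero q), zero_mul] at this
      exact (this.mono_left nhdsWithin_le_nhds).congr' (by
        filter_upwards [hSpunct] with z hz using hz.symm)
    have hβlast : β (Fin.last q) = 0 := tendsto_nhds_unique hlim1 hlim2
    have hS0 : S 0 = β (Fin.last q) := by
      show (∑ j : Fin (q+1), β j * (0:ℂ) ^ (q - (j:ℕ)) * vs (j:ℕ) 0) = β (Fin.last q)
      rw [Fin.sum_univ_castSucc]
      have hz : ∀ i : Fin q,
          β i.castSucc * (0:ℂ) ^ (q - ((i.castSucc : Fin (q+1)):ℕ)) * vs ((i.castSucc : Fin (q+1)):ℕ) 0 = 0 := by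
        intro i
        rw [Fin.coe_castSucc, zero_pow (Nat.sub_ne_zero_of_lt i.isLt)]
        ring
      rw [Finset.sum_congr rfl (fun i _ => hz i), Finset.sum_const_zero, zero_add,
        Fin.val_last, Nat.sub_self, pow_zero, hvs0 q]
      ring
    have hSev : ∀ᶠ z in 𝓝 (0:ℂ), S z = z ^ (q+1) * h z := by
      rw [eventually_nhdsWithin_iff] at hSpunct
      filter_upwards [hSpunct] with z hz
      by_cases hz0 : z = 0
      · subst hz0
        rw [hS0, hβlast, zero_pow (Nat.succ_ne_zero q), zero_mul]
      · exact hz hz0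
    -- apply IH to the castSucc part
    have hβ' : (fun i : Fin q => β i.castSucc) = 0 := by
      refine ih vs hvs hvs0 _ h hh ?_
      filter_upwards [hSev] with z hz
      have hSz : S z = ∑ i : Fin q, β i.castSucc * z ^ (q - (i:ℕ)) * vs (i:ℕ) z := by
        show (∑ j : Fin (q+1), β j * z ^ (q - (j:ℕ)) * vs (j:ℕ) z) = _
        rw [Fin.sum_univ_castSucc]
        simp only [Fin.val_last, hβlast, zero_mul, add_zero, Fin.coe_castSucc]
      rw [← hSz]
      exact hz
    funext j
    rcases Fin.eq_castSucc_or_eq_last j with ⟨i, rfl⟩ | rfl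
    · exact congrFun hβ' i
    · exact hβlast



lemma my_isBigO_of_hasSum (D : ℂ → ℂ) (d : ℕ → ℂ) (n : ℕ)
    (hev : ∀ᶠ z in 𝓝[≠] (0:ℂ), HasSum (fun k => d k * z ^ (k + n)) (D z)) :
    D =O[𝓝[≠] (0:ℂ)] fun z => z ^ n := by
  have hev' := hev
  rw [eventually_nhdsWithin_iff, Metric.eventually_nhds_iff] at hev'
  obtain ⟨ε, hε, hball⟩ := hev'
  set B : ℝ := ε / 2 with hBdef
  have hB : 0 < B := by positivity
  set z₀ : ℂ := (B : ℂ) with hz₀def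
  have hz₀norm : ‖z₀‖ = B := by
    rw [hz₀def, Complex.norm_real, Real.norm_of_nonneg hB.le]
  have hz₀ne : z₀ ≠ 0 := by
    intro h; rw [h, norm_zero] at hz₀norm; exact (ne_of_gt hB) hz₀norm.symm
  have hsum₀ : HasSum (fun k => d k * z₀ ^ (k + n)) (D z₀) := by
    refine hball ?_ hz₀ne
    rw [dist_eq_norm, sub_zero, hz₀norm, hBdef]
    linarith
  have htend : Tendsto (fun k => ‖d k * z₀ ^ (k + n)‖) atTop (𝓝 0) := by
    have := hsum₀.summable.tendsto_atTop_zero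
    simpa using this.norm
  obtain ⟨M, hM⟩ := htend.bddAbove_range
  have hMb : ∀ k : ℕ, ‖d k‖ * B ^ (k + n) ≤ M := by
    intro k
    have := hM (Set.mem_range_self k)
    rwa [norm_mul, norm_pow, hz₀norm] at this
  rw [isBigO_iff]
  refine ⟨M / B ^ n * 2, ?_⟩
  have hsmall : ∀ᶠ z in 𝓝[≠] (0:ℂ), ‖z‖ ≤ B / 2 := by
    refine Filter.Eventually.filter_mono nhdsWithin_le_nhds ?_
    refine Metric.eventually_nhds_iff.mpr ⟨B/2, by positivity, fun {y} hy => ?_⟩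
    rw [dist_eq_norm, sub_zero] at hy
    exact le_of_lt hy
  filter_upwards [hev, hsmall] with z hzsum hzsmall
  have hbound : ∀ k : ℕ, ‖d k * z ^ (k + n)‖ ≤ (M / B ^ n * ‖z‖ ^ n) * (1/2) ^ k := by
    intro k
    have h1 : ‖d k‖ * B ^ k ≤ M / B ^ n := by
      rw [le_div_iff₀ (by positivity)]
      calc ‖d k‖ * B ^ k * B ^ n = ‖d k‖ * B ^ (k + n) := by rw [pow_add]; ring
        _ ≤ M := hMb k
    calc ‖d k * z ^ (k + n)‖ = ‖d k‖ * (‖z‖ ^ k * ‖z‖ ^ n) := by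
          rw [norm_mul, norm_pow, pow_add]
      _ ≤ ‖d k‖ * ((B/2) ^ k * ‖z‖ ^ n) := by gcongr
      _ = (‖d k‖ * B ^ k) * ‖z‖ ^ n * (1/2) ^ k := by simp only [div_pow, one_pow]; ring
      _ ≤ (M / B ^ n) * ‖z‖ ^ n * (1/2) ^ k := by
          have hnn : (0:ℝ) ≤ ‖z‖ ^ n * (1/2) ^ k := by positivity
          calc (‖d k‖ * B ^ k) * ‖z‖ ^ n * (1/2) ^ k
              = (‖d k‖ * B ^ k) * (‖z‖ ^ n * (1/2) ^ k) := by ring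
            _ ≤ (M / B ^ n) * (‖z‖ ^ n * (1/2) ^ k) := mul_le_mul_of_nonneg_right h1 hnn
            _ = (M / B ^ n) * ‖z‖ ^ n * (1/2) ^ k := by ring
  have hgeo : HasSum (fun k : ℕ => (M / B ^ n * ‖z‖ ^ n) * (1/2:ℝ) ^ k)
      ((M / B ^ n * ‖z‖ ^ n) * 2) := by
    have hg : HasSum (fun k : ℕ => (1/2:ℝ) ^ k) 2 := by
      have := hasSum_geometric_of_lt_one (r := (1/2:ℝ)) (by norm_num) (by norm_num)
      norm_num at this
      exact this
    exact hg.mul_left _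
  have := tsum_of_norm_bounded hgeo hbound
  rw [hzsum.tsum_eq] at this
  calc ‖D z‖ ≤ (M / B ^ n * ‖z‖ ^ n) * 2 := this
    _ = M / B ^ n * 2 * ‖z ^ n‖ := by rw [norm_pow]; ring

theorem stmt_0_main (f : ℂ → ℂ)
    (hf : DifferentiableOn ℂ f (ball (0 : ℂ) 1))
    (hf0 : f 0 = 0) (hf1 : deriv f 0 = 1) :
    ∀ p : ℕ, ∃! α : Fin p → ℂ, ∃ a : ℕ → ℂ,
      ∀ᶠ z in 𝓝[≠] (0 : ℂ),
        HasSum (fun k : ℕ => a k * z ^ (k + 2))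
          (z ^ (1 - (p : ℤ)) * deriv f z +
            (-(f z) ^ (1 - (p : ℤ)) + ∑ j : Fin p, α j * (f z) ^ (1 - ((j : ℕ) : ℤ)))) := by
  intro p
  have h0mem : (0:ℂ) ∈ ball (0:ℂ) 1 := mem_ball_self one_pos
  have hfa : AnalyticAt ℂ f 0 := hf.analyticAt (isOpen_ball.mem_nhds h0mem)
  have hda : AnalyticAt ℂ (deriv f) 0 := (hf.analyticOnNhd isOpen_ball).deriv 0 h0mem
  set u : ℂ → ℂ := dslope f 0 with hudef
  have hu : AnalyticAt ℂ u 0 := my_analyticAt_dslope hfa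
  have hu0 : u 0 = 1 := by rw [hudef, dslope_same, hf1]
  have hu0' : u 0 ≠ 0 := by rw [hu0]; exact one_ne_zero
  have hfu : ∀ z, f z = z * u z := my_dslope_mul hf0
  have hune : ∀ᶠ z in 𝓝 (0:ℂ), u z ≠ 0 := hu.continuousAt.eventually_ne hu0'
  set v : ℕ → ℂ → ℂ := fun m z => u z * ((u z)⁻¹) ^ m with hvdef
  have hv : ∀ m, AnalyticAt ℂ (v m) 0 := fun m => hu.mul ((hu.inv hu0').pow m)
  have hv0 : ∀ m, v m 0 = 1 := fun m => by simp [hvdef, hu0]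
  set w : ℂ → ℂ := fun z => deriv f z - v p z with hwdef
  have hw : AnalyticAt ℂ w 0 := hda.sub (hv p)
  have hw0 : w 0 = 0 := by simp [hwdef, hf1, hv0 p]
  -- key algebraic identity
  have key : ∀ (α : Fin p → ℂ) (z : ℂ), z ≠ 0 → u z ≠ 0 →
      z ^ (1 - (p:ℤ)) * deriv f z +
        (-(f z) ^ (1 - (p:ℤ)) + ∑ j : Fin p, α j * (f z) ^ (1 - ((j:ℕ):ℤ)))
      = z ^ (1 - (p:ℤ)) * (w z + ∑ j : Fin p, α j * z ^ (p - (j:ℕ)) * v (j:ℕ) z) := by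
    intro α z hz hzu
    have hfz : ∀ m : ℕ, (f z) ^ (1 - (m:ℤ)) = z ^ (1 - (m:ℤ)) * v m z := by
      intro m
      rw [hfu z, mul_zpow]
      congr 1
      rw [zpow_sub₀ hzu, zpow_one, zpow_natCast, div_eq_mul_inv, ← inv_pow]
    have hsplit : ∀ j : Fin p, z ^ (1 - ((j:ℕ):ℤ)) = z ^ (1 - (p:ℤ)) * z ^ ((p:ℕ) - (j:ℕ)) := by
      intro j
      rw [← zpow_natCast z (p - (j:ℕ)), ← zpow_add₀ hz]
      congr 1
      have hle : (j:ℕ) ≤ p := le_of_lt j.isLt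
      push_cast [Nat.cast_sub hle]
      ring
    have hterm : ∀ j : Fin p, α j * (f z) ^ (1 - ((j:ℕ):ℤ))
        = z ^ (1 - (p:ℤ)) * (α j * z ^ (p - (j:ℕ)) * v (j:ℕ) z) := by
      intro j
      rw [hfz (j:ℕ), hsplit j]
      ring
    rw [hfz p, Finset.sum_congr rfl fun j _ => hterm j, ← Finset.mul_sum]
    simp only [hwdef]
    ring
  -- existence
  obtain ⟨α₀, h, hh, he⟩ := my_exists_cancel p w v hw hw0 hv hv0
  obtain ⟨pw, hpw⟩ := hh
  have hps : ∀ᶠ y in 𝓝 (0:ℂ), HasSum (fun n => pw n fun _ => y) (h y) := by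
    have := hpw.eventually_hasSum
    simpa using this
  have hP0 : ∀ᶠ z in 𝓝[≠] (0:ℂ),
      HasSum (fun k : ℕ => pw.coeff k * z ^ (k + 2))
        (z ^ (1 - (p:ℤ)) * deriv f z +
          (-(f z) ^ (1 - (p:ℤ)) + ∑ j : Fin p, α₀ j * (f z) ^ (1 - ((j:ℕ):ℤ)))) := by
    filter_upwards [hps.filter_mono nhdsWithin_le_nhds, hune.filter_mono nhdsWithin_le_nhds,
      self_mem_nhdsWithin] with z hzsum hzu hz
    have hz : z ≠ 0 := hz
    have h1 : HasSum (fun k : ℕ => pw.coeff k * z ^ k) (h z) := by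
      have hcoe : (fun n : ℕ => pw n fun _ => z) = fun k : ℕ => pw.coeff k * z ^ k :=
        funext fun k => by rw [pw.apply_eq_pow_smul_coeff, smul_eq_mul]; ring
      rwa [hcoe] at hzsum
    have h2 := h1.mul_left (z ^ 2)
    have h3 : (fun k : ℕ => z ^ 2 * (pw.coeff k * z ^ k)) = fun k : ℕ => pw.coeff k * z ^ (k + 2) :=
      funext fun k => by ring
    rw [h3] at h2
    have hval : z ^ (1 - (p:ℤ)) * deriv f z +
        (-(f z) ^ (1 - (p:ℤ)) + ∑ j : Fin p, α₀ j * (f z) ^ (1 - ((j:ℕ):ℤ))) = z ^ 2 * h z := by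
      rw [key α₀ z hz hzu, he z, ← mul_assoc]
      congr 1
      rw [← zpow_natCast z (p + 1), ← zpow_add₀ hz, ← zpow_natCast z 2]
      congr 1
      push_cast
      ring
    rw [hval]
    exact h2
  refine ⟨α₀, ⟨fun k => pw.coeff k, hP0⟩, ?_⟩
  -- uniqueness
  intro α' hα'
  obtain ⟨a', hev'⟩ := hα'
  have hevD : ∀ᶠ z in 𝓝[≠] (0:ℂ),
      HasSum (fun k : ℕ => (a' k - pw.coeff k) * z ^ (k + (p+1)))
        (∑ j : Fin p, (α' j - α₀ j) * z ^ (p - (j:ℕ)) * v (j:ℕ) z) := by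
    filter_upwards [hev', hP0, hune.filter_mono nhdsWithin_le_nhds, self_mem_nhdsWithin]
      with z h1 h2 hzu hz
    have hz : z ≠ 0 := hz
    have hsub := h1.sub h2
    have hterm : (fun k : ℕ => a' k * z ^ (k+2) - pw.coeff k * z ^ (k+2))
        = fun k : ℕ => (a' k - pw.coeff k) * z ^ (k+2) := funext fun k => by ring
    rw [hterm, key α' z hz hzu, key α₀ z hz hzu] at hsub
    have hdiff : z ^ (1-(p:ℤ)) * (w z + ∑ j : Fin p, α' j * z ^ (p-(j:ℕ)) * v (j:ℕ) z)
        - z ^ (1-(p:ℤ)) * (w z + ∑ j : Fin p, α₀ j * z ^ (p-(j:ℕ)) * v (j:ℕ) z)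
        = z ^ (1-(p:ℤ)) * ∑ j : Fin p, (α' j - α₀ j) * z ^ (p-(j:ℕ)) * v (j:ℕ) z := by
      have hsd : ∑ j : Fin p, (α' j - α₀ j) * z ^ (p-(j:ℕ)) * v (j:ℕ) z
          = (∑ j : Fin p, α' j * z ^ (p-(j:ℕ)) * v (j:ℕ) z)
            - ∑ j : Fin p, α₀ j * z ^ (p-(j:ℕ)) * v (j:ℕ) z := by
        rw [← Finset.sum_sub_distrib]
        exact Finset.sum_congr rfl fun j _ => by ring
      rw [hsd]
      ring
    rw [hdiff] at hsub
    have hmul := hsub.mul_left (z ^ ((p:ℤ) - 1))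
    have ht2 : (fun k : ℕ => z ^ ((p:ℤ)-1) * ((a' k - pw.coeff k) * z ^ (k+2)))
        = fun k : ℕ => (a' k - pw.coeff k) * z ^ (k + (p+1)) := by
      funext k
      rw [← zpow_natCast z (k+2), ← zpow_natCast z (k+(p+1)),
        show ((k+(p+1):ℕ):ℤ) = ((p:ℤ)-1) + ((k+2:ℕ):ℤ) by push_cast; ring, zpow_add₀ hz]
      ring
    have hval2 : z ^ ((p:ℤ)-1) *
        (z ^ (1-(p:ℤ)) * ∑ j : Fin p, (α' j - α₀ j) * z ^ (p-(j:ℕ)) * v (j:ℕ) z)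
        = ∑ j : Fin p, (α' j - α₀ j) * z ^ (p-(j:ℕ)) * v (j:ℕ) z := by
      rw [← mul_assoc, ← zpow_add₀ hz, show ((p:ℤ)-1) + (1-(p:ℤ)) = 0 by ring, zpow_zero, one_mul]
    rw [ht2, hval2] at hmul
    exact hmul
  have hD : AnalyticAt ℂ (fun z => ∑ j : Fin p, (α' j - α₀ j) * z ^ (p - (j:ℕ)) * v (j:ℕ) z) 0 :=
    Finset.analyticAt_fun_sum _ fun j _ =>
      (analyticAt_const.mul ((analyticAt_id).pow _)).mul (hv (j:ℕ))
  have hO := my_isBigO_of_hasSum _ _ (p+1) hevD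
  obtain ⟨h', hh', he'⟩ := my_pow_factor (p+1) _ hD hO
  have hzero := my_cancel_unique p v hv hv0 (fun j => α' j - α₀ j) h' hh'
    (Filter.Eventually.of_forall fun z => he' z)
  funext j
  have := congrFun hzero j
  simpa [sub_eq_zero] using this


/-- Let `f` be univalent on the unit disk, `f 0 = 0`, `f' 0 = 1`, with Taylor
coefficients `c` (i.e. `f z = ∑ n, c n * z ^ (n+1)`, `c 0 = 1`). Then for every `p ≥ 0` there is a
unique function of the form `Λ_p(u) = α_0 u + α_1 + α_2/u + ⋯ + α_{p-1}/u^{p-2} - 1/u^{p-1}`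
(encoded via its coefficients `α : Fin p → ℂ`, the coefficient of `u^{1-p}` being `-1`) such that
`z^{1-p} f'(z) + Λ_p(f z)` has a power series expansion at `0` containing only powers `z^k`, `k ≥ 2`. -/
theorem stmt_0 (f : ℂ → ℂ) (c : ℕ → ℂ)
    (hf : DifferentiableOn ℂ f (ball (0 : ℂ) 1))
    (hinj : Set.InjOn f (ball (0 : ℂ) 1))
    (hf0 : f 0 = 0) (hf1 : deriv f 0 = 1) (hc0 : c 0 = 1)
    (hc : ∀ z ∈ ball (0 : ℂ) 1, HasSum (fun n : ℕ => c n * z ^ (n + 1)) (f z)) :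
    ∀ p : ℕ, ∃! α : Fin p → ℂ, ∃ a : ℕ → ℂ,
      ∀ᶠ z in 𝓝[≠] (0 : ℂ),
        HasSum (fun k : ℕ => a k * z ^ (k + 2))
          (z ^ (1 - (p : ℤ)) * deriv f z +
            (-(f z) ^ (1 - (p : ℤ)) + ∑ j : Fin p, α j * (f z) ^ (1 - ((j : ℕ) : ℤ)))) := by
  intro p
  exact stmt_0_main f hf hf0 hf1 p
end

section
/- The Grunsky coefficients satisfy the symmetry relation (1/n) β_{n,k} = (1/k) β_{k,n} for all integers n, k ≥ 1. -/
open Topology Filter Metric Set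

/-- A power series (with no constant term) whose sum is `0` for all `u` in a punctured
neighborhood of `0` has all coefficients zero. -/
lemma key_zero (a : ℕ → ℂ)
    (h : ∀ᶠ u in 𝓝[≠] (0 : ℂ), HasSum (fun n => a n * u ^ (n + 1)) 0) :
    ∀ n, a n = 0 := by
  classical
  set b : ℕ → ℂ := fun n => Nat.rec 0 (fun m _ => a m) n with hbdef
  have hb0 : b 0 = 0 := rfl
  have hbs : ∀ n, b (n + 1) = a n := fun _ => rfl
  have hab : ∀ u : ℂ, HasSum (fun n => a n * u ^ (n + 1)) 0 →
      HasSum (fun n => b n * u ^ n) 0 := by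
    intro u hu
    have h1 : HasSum (fun n => b (n + 1) * u ^ (n + 1)) 0 := by
      simpa [hbs] using hu
    have h2 := (hasSum_nat_add_iff (f := fun n => b n * u ^ n) 1).mp h1
    simpa [hb0] using h2
  obtain ⟨u₀, hu₀sum, hu₀mem⟩ :=
    (h.and (eventually_mem_nhdsWithin (s := {(0 : ℂ)}ᶜ))).exists
  have hu₀ne : u₀ ≠ 0 := hu₀mem
  set p : FormalMultilinearSeries ℂ ℂ ℂ := FormalMultilinearSeries.ofScalars ℂ b with hp
  have hrad : (‖u₀‖₊ : ENNReal) ≤ p.radius := by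
    apply p.le_radius_of_tendsto (l := 0)
    have h1 : Filter.Tendsto (fun n => b n * u₀ ^ n) atTop (𝓝 0) :=
      (hab u₀ hu₀sum).summable.tendsto_atTop_zero
    have h2 : Filter.Tendsto (fun n => ‖b n * u₀ ^ n‖) atTop (𝓝 0) := by
      simpa using h1.norm
    have h3 : (fun n => ‖p n‖ * (‖u₀‖₊ : ℝ) ^ n) = fun n => ‖b n * u₀ ^ n‖ := by
      funext n
      rw [hp, FormalMultilinearSeries.ofScalars_norm, norm_mul, norm_pow, coe_nnnorm]
    rw [h3]
    exact h2
  have hradpos : 0 < p.radius := lt_of_lt_of_le (by simpa using hu₀ne) hrad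
  have hball := p.hasFPowerSeriesOnBall hradpos
  have hat : HasFPowerSeriesAt p.sum p 0 := hball.hasFPowerSeriesAt
  have hsum_eq : ∀ u : ℂ, HasSum (fun n => a n * u ^ (n + 1)) 0 → p.sum u = 0 := by
    intro u hu
    have h1 : p.sum u = ∑' n, b n * u ^ n := by
      have := FormalMultilinearSeries.ofScalars_sum_eq (E := ℂ) b u
      simpa [FormalMultilinearSeries.ofScalarsSum, smul_eq_mul, hp] using this
    rw [h1, (hab u hu).tsum_eq]
  have hfreq : ∃ᶠ u in 𝓝[≠] (0 : ℂ), p.sum u = 0 :=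
    (h.mono fun u hu => hsum_eq u hu).frequently
  have hev : ∀ᶠ u in 𝓝 (0 : ℂ), p.sum u = 0 :=
    (hat.analyticAt.frequently_zero_iff_eventually_zero).mp hfreq
  have hzero : HasFPowerSeriesAt (0 : ℂ → ℂ) p 0 := hat.congr hev
  have hp0 : p = 0 := hzero.eq_zero
  intro n
  have h0 : p (n + 1) = 0 := by rw [hp0]; rfl
  have := (FormalMultilinearSeries.ofScalars_eq_zero ℂ (c := b) (n + 1)).mp (by rw [← hp]; exact h0)
  simpa [hbs] using this

/-- The Grunsky coefficients `β_{n,k}` of `h(z) = 1/f(1/z)`, defined by the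
expansion `log[(1/f(u) - 1/f(v))/(1/u - 1/v)] = -∑_{n≥1} ∑_{k≥1} (1/n) β_{n,k} u^n v^k` for `u, v`
in a punctured neighborhood of `0` with `u ≠ v`, satisfy the symmetry relation
`(1/n) β_{n,k} = (1/k) β_{k,n}` for all `n, k ≥ 1`. -/
theorem stmt_6 (f : ℂ → ℂ) (c : ℕ → ℂ)
    (hf : DifferentiableOn ℂ f (ball (0 : ℂ) 1))
    (hinj : Set.InjOn f (ball (0 : ℂ) 1))
    (hf0 : f 0 = 0) (hf1 : deriv f 0 = 1) (hc0 : c 0 = 1)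
    (hc : ∀ z ∈ ball (0 : ℂ) 1, HasSum (fun n : ℕ => c n * z ^ (n + 1)) (f z))
    (β : ℕ → ℕ → ℂ)
    (hβ : ∃ ε > (0 : ℝ), ∀ u v : ℂ, u ≠ 0 → v ≠ 0 → ‖u‖ < ε → ‖v‖ < ε → u ≠ v →
      HasSum (fun nk : ℕ × ℕ =>
          -((1 / ((nk.1 : ℂ) + 1)) * β (nk.1 + 1) (nk.2 + 1) * u ^ (nk.1 + 1) * v ^ (nk.2 + 1)))
        (Complex.log (((f u)⁻¹ - (f v)⁻¹) / (u⁻¹ - v⁻¹)))) :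
    ∀ n k : ℕ, 1 ≤ n → 1 ≤ k → (1 / (n : ℂ)) * β n k = (1 / (k : ℂ)) * β k n := by
  obtain ⟨ε, hε, H⟩ := hβ
  set d : ℕ → ℕ → ℂ := fun n k =>
    -((1 / ((n : ℂ) + 1)) * β (n + 1) (k + 1)) + (1 / ((k : ℂ) + 1)) * β (k + 1) (n + 1) with hd
  have key : ∀ u v : ℂ, u ≠ 0 → v ≠ 0 → ‖u‖ < ε → ‖v‖ < ε → u ≠ v →
      HasSum (fun nk : ℕ × ℕ => d nk.1 nk.2 * u ^ (nk.1 + 1) * v ^ (nk.2 + 1)) 0 := by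
    intro u v hu hv hus hvs huv
    have h1 := H u v hu hv hus hvs huv
    have h2 := H v u hv hu hvs hus huv.symm
    have hlog : Complex.log (((f v)⁻¹ - (f u)⁻¹) / (v⁻¹ - u⁻¹)) =
        Complex.log (((f u)⁻¹ - (f v)⁻¹) / (u⁻¹ - v⁻¹)) := by
      rw [← neg_sub (f u)⁻¹ (f v)⁻¹, ← neg_sub u⁻¹ v⁻¹, neg_div_neg_eq]
    rw [hlog] at h2
    have h2' := (Equiv.prodComm ℕ ℕ).hasSum_iff.mpr h2
    convert h1.sub h2' using 1
    · rfl
    · funext nk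
      simp only [Function.comp_apply, Equiv.prodComm_apply, Prod.fst_swap, Prod.snd_swap, hd]
      ring
    · rw [sub_self]
  have hfib : ∀ v : ℂ, v ≠ 0 → ‖v‖ < ε → ∀ n, (∑' k, d n k * v ^ (k + 1)) = 0 := by
    intro v hv hvs
    apply key_zero
    have hev1 : ∀ᶠ u in 𝓝[≠] (0 : ℂ), ‖u‖ < ε := by
      apply Filter.Eventually.filter_mono nhdsWithin_le_nhds
      filter_upwards [Metric.ball_mem_nhds (0 : ℂ) hε] with u hu
      simpa using hu
    have hev2 : ∀ᶠ u in 𝓝[≠] (0 : ℂ), u ≠ v := eventually_ne_nhdsWithin (Ne.symm hv)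
    filter_upwards [hev1, hev2, eventually_mem_nhdsWithin] with u hus huv hu0
    have hu0' : u ≠ 0 := hu0
    have h3 := key u v hu0' hv hus hvs huv
    have hfw := h3.prod_fiberwise (fun n => (h3.summable.prod_factor n).hasSum)
    have heq : ∀ n, (∑' k, d n k * u ^ (n + 1) * v ^ (k + 1)) =
        (∑' k, d n k * v ^ (k + 1)) * u ^ (n + 1) := by
      intro n
      rw [← tsum_mul_right]
      exact tsum_congr fun k => by ring
    simpa only [heq] using hfw
  have hcoef : ∀ n k, d n k = 0 := by
    intro n
    apply key_zero
    have hev1 : ∀ᶠ v in 𝓝[≠] (0 : ℂ), ‖v‖ < ε := by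
      apply Filter.Eventually.filter_mono nhdsWithin_le_nhds
      filter_upwards [Metric.ball_mem_nhds (0 : ℂ) hε] with v hv
      simpa using hv
    filter_upwards [hev1, eventually_mem_nhdsWithin] with v hvs hv0
    have hv : v ≠ 0 := hv0
    have hu : v / 2 ≠ 0 := div_ne_zero hv two_ne_zero
    have hus : ‖v / 2‖ < ε := by
      rw [norm_div]
      calc ‖v‖ / ‖(2 : ℂ)‖ ≤ ‖v‖ := by
            apply div_le_self (norm_nonneg _)
            simp
        _ < ε := hvs
    have huv : v / 2 ≠ v := by
      intro hcon
      apply hv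
      have : v / 2 - v = 0 := by rw [hcon]; ring
      have : -(v / 2) = 0 := by rw [← this]; ring
      simpa using this
    have h3 := key (v / 2) v hu hv hus hvs huv
    have hs := h3.summable.prod_factor n
    have hs2 : Summable (fun k => d n k * v ^ (k + 1)) := by
      have hne : ((v / 2) ^ (n + 1) : ℂ) ≠ 0 := pow_ne_zero _ hu
      have := hs.mul_left (((v / 2) ^ (n + 1) : ℂ))⁻¹
      refine this.congr fun k => ?_
      field_simp
    have h4 := hs2.hasSum
    rwa [hfib v hv hvs n] at h4
  intro n k hn hk
  obtain ⟨n', rfl⟩ : ∃ m, n = m + 1 := ⟨n - 1, (Nat.succ_pred_eq_of_pos hn).symm⟩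
  obtain ⟨k', rfl⟩ : ∃ m, k = m + 1 := ⟨k - 1, (Nat.succ_pred_eq_of_pos hk).symm⟩
  have h0 := hcoef n' k'
  rw [hd] at h0
  push_cast
  linear_combination -h0
end

section
/- For every fixed w ∈ ℂ and z in a sufficiently small neighborhood of 0 (small enough that w f(z) ≠ 1), one has f(z)/(1 − w f(z)) = ∑_{n≥1} F_n'(w) z^n / n, where F_n' denotes the derivative of the n-th Faber polynomial of h(z) = 1/f(1/z). -/
open Topology Filter Metric Set

open FormalMultilinearSeries in
private lemma coeff_eq_iteratedDeriv_aux {h : ℂ → ℂ} {p : FormalMultilinearSeries ℂ ℂ ℂ}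
    {R : ENNReal} (hp : HasFPowerSeriesOnBall h p 0 R) (n : ℕ) :
    p.coeff n = iteratedDeriv n h 0 / n.factorial := by
  have h1 := hp.factorial_smul (1 : ℂ) n
  rw [← iteratedDeriv_eq_iteratedFDeriv] at h1
  have hne : ((n.factorial : ℂ)) ≠ 0 := Nat.cast_ne_zero.mpr n.factorial_ne_zero
  rw [← h1, nsmul_eq_mul, mul_div_cancel_left₀ _ hne]
  rfl

private lemma ofScalars_coeff_aux (c : ℕ → ℂ) (n : ℕ) :
    (FormalMultilinearSeries.ofScalars ℂ c).coeff n = c n := by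
  show FormalMultilinearSeries.ofScalars ℂ c n (fun _ => (1:ℂ)) = c n
  rw [FormalMultilinearSeries.ofScalars_apply_eq]
  simp

/-- With `F_n` the Faber polynomials of `h(z) = 1/f(1/z)`: for every fixed
`w : ℂ` and `z` in a sufficiently small neighborhood of `0`,
`f(z)/(1 - w f(z)) = ∑_{n≥1} F_n'(w) z^n / n`. -/
theorem stmt_9 (f : ℂ → ℂ) (c : ℕ → ℂ)
    (hf : DifferentiableOn ℂ f (ball (0 : ℂ) 1))
    (hinj : Set.InjOn f (ball (0 : ℂ) 1))
    (hf0 : f 0 = 0) (hf1 : deriv f 0 = 1) (hc0 : c 0 = 1)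
    (hc : ∀ z ∈ ball (0 : ℂ) 1, HasSum (fun n : ℕ => c n * z ^ (n + 1)) (f z))
    (F : ℕ → Polynomial ℂ) (hF0 : F 0 = 1)
    (hF : ∀ w : ℂ, ∀ᶠ z in 𝓝[≠] (0 : ℂ),
      HasSum (fun n : ℕ => (F n).eval w * z ^ n) (z * deriv f z / (f z - w * (f z) ^ 2))) :
    ∀ w : ℂ, ∀ᶠ z in 𝓝 (0 : ℂ),
      HasSum (fun n : ℕ =>
          (Polynomial.derivative (F (n + 1))).eval w / ((n : ℂ) + 1) * z ^ (n + 1))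
        (f z / (1 - w * f z)) := by
  intro w
  classical
  have hball : (ball (0:ℂ) 1) ∈ 𝓝 (0:ℂ) := ball_mem_nhds _ one_pos
  have hfa : AnalyticOnNhd ℂ f (ball (0:ℂ) 1) := hf.analyticOnNhd isOpen_ball
  have hdf : AnalyticOnNhd ℂ (deriv f) (ball (0:ℂ) 1) := hfa.deriv
  -- the unit factor u with f z = z * u z
  set u : ℂ → ℂ := fun z => if z = 0 then 1 else f z / z with hu_def
  have hu0 : u 0 = 1 := by simp [hu_def]
  have hus : ∀ z ∈ ball (0:ℂ) 1, HasSum (fun n => c n * z ^ n) (u z) := by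
    intro z hz
    by_cases h0 : z = 0
    · subst h0
      have hs : ∀ b : ℕ, b ≠ 0 → (fun n => c n * (0:ℂ) ^ n) b = 0 := by
        intro b hb; simp [zero_pow hb]
      simpa [hu0, hc0] using hasSum_single (f := fun n => c n * (0:ℂ) ^ n) 0 hs
    · have h1 := (hc z hz).mul_right z⁻¹
      have h2 : (fun n => c n * z ^ (n+1) * z⁻¹) = fun n => c n * z ^ n := by
        funext n; field_simp [pow_succ]; ring
      rw [h2] at h1
      have h3 : u z = f z * z⁻¹ := by simp [hu_def, h0, div_eq_mul_inv]
      rw [h3]; exact h1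
  have hfu : ∀ z ∈ ball (0:ℂ) 1, f z = z * u z := by
    intro z hz
    by_cases h0 : z = 0
    · simp [h0, hf0]
    · simp [hu_def, h0]
      field_simp
  have huA : AnalyticAt ℂ u 0 := by
    have h1 : HasFPowerSeriesAt u (FormalMultilinearSeries.ofScalars ℂ c) 0 := by
      rw [hasFPowerSeriesAt_iff]
      filter_upwards [hball] with z hz
      have := hus z hz
      simpa [ofScalars_coeff_aux, smul_eq_mul, mul_comm] using this
    exact h1.analyticAt
  -- choice of radii
  set δ : ℝ := (2 * (‖w‖ + 1))⁻¹ with hδ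
  have hδpos : 0 < δ := by positivity
  have hcf : ContinuousAt f 0 := (hf.differentiableAt hball).continuousAt
  have h1 : ∀ᶠ z in 𝓝 (0:ℂ), ‖f z‖ < δ := by
    have h := hcf.tendsto
    rw [hf0] at h
    filter_upwards [h (ball_mem_nhds (0:ℂ) hδpos)] with z hz
    simpa [mem_ball_zero_iff] using hz
  have h2 : ∀ᶠ z in 𝓝 (0:ℂ), u z ≠ 0 :=
    huA.continuousAt.eventually_ne (by simp [hu0])
  have h3 : ∀ᶠ z in 𝓝 (0:ℂ), AnalyticAt ℂ u z := huA.eventually_analyticAt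
  have h4 : ∀ᶠ z in 𝓝 (0:ℂ), z ∈ ball (0:ℂ) 1 := hball
  obtain ⟨ε, hε, hE⟩ := Metric.eventually_nhds_iff.mp ((h1.and (h2.and h3)).and h4)
  have hε4 : (0:ℝ) < ε/4 := by linarith
  set rr : ℝ := ε/2 with hrr_def
  have hrrpos : (0:ℝ) < rr := by rw [hrr_def]; linarith
  set R : NNReal := ⟨ε/4, hε4.le⟩ with hR_def
  have hRpos : (0:NNReal) < R := by
    rw [← NNReal.coe_lt_coe]; exact hε4
  set r : ℝ := (R : ℝ) with hr_def
  have hr : (0:ℝ) < r := hε4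
  have hr_rr : r < rr := by rw [hr_def, hrr_def]; show ε/4 < ε/2; linarith
  have hPrr : ∀ z ∈ closedBall (0:ℂ) rr,
      (‖f z‖ < δ ∧ (u z ≠ 0 ∧ AnalyticAt ℂ u z)) ∧ z ∈ ball (0:ℂ) 1 := by
    intro z hz
    apply hE
    have := mem_closedBall.mp hz
    calc dist z 0 ≤ rr := this
    _ < ε := by rw [hrr_def]; linarith
  have hz1 : closedBall (0:ℂ) rr ⊆ ball (0:ℂ) 1 := fun z hz => (hPrr z hz).2
  have hune : ∀ z ∈ closedBall (0:ℂ) rr, u z ≠ 0 := fun z hz => (hPrr z hz).1.2.1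
  have hr_subset : closedBall (0:ℂ) r ⊆ closedBall (0:ℂ) rr :=
    closedBall_subset_closedBall hr_rr.le
  have hrball : closedBall (0:ℂ) r ⊆ ball (0:ℂ) rr := closedBall_subset_ball hr_rr
  -- denominator bounds
  have hden : ∀ w' ∈ closedBall w 1, ∀ z ∈ closedBall (0:ℂ) rr,
      (1:ℝ)/2 ≤ ‖1 - w' * f z‖ := by
    intro w' hw' z hz
    have hfz : ‖f z‖ < δ := (hPrr z hz).1.1
    have hw'n : ‖w'‖ ≤ ‖w‖ + 1 := by
      have hd : ‖w' - w‖ ≤ 1 := by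
        have := mem_closedBall.mp hw'
        rwa [dist_eq_norm] at this
      calc ‖w'‖ ≤ ‖w‖ + ‖w' - w‖ := norm_le_norm_add_norm_sub' w' w
      _ ≤ ‖w‖ + 1 := by linarith
    have hb : ‖w' * f z‖ ≤ 1/2 := by
      rw [norm_mul]
      calc ‖w'‖ * ‖f z‖ ≤ (‖w‖+1) * δ :=
        mul_le_mul hw'n hfz.le (norm_nonneg _) (by positivity)
      _ = 1/2 := by
        rw [hδ]
        have : ‖w‖ + 1 ≠ 0 := by positivity
        field_simp
    calc (1:ℝ)/2 = ‖(1:ℂ)‖ - 1/2 := by norm_num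
    _ ≤ ‖(1:ℂ)‖ - ‖w' * f z‖ := by linarith
    _ ≤ ‖1 - w' * f z‖ := norm_sub_norm_le _ _
  have hden0 : ∀ w' ∈ closedBall w 1, ∀ z ∈ closedBall (0:ℂ) rr,
      1 - w' * f z ≠ 0 := by
    intro w' hw' z hz h
    have := hden w' hw' z hz
    rw [h] at this
    norm_num at this
  have hwmem : w ∈ closedBall w 1 := mem_closedBall_self zero_le_one
  -- the functions
  set g : ℂ → ℂ := fun z => f z / (1 - w * f z) with hg
  set B : ℂ → ℂ → ℂ := fun w' z => deriv f z / (u z * (1 - w' * f z)) with hB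
  set B' : ℂ → ℂ → ℂ := fun w' z => deriv f z * f z / (u z * (1 - w' * f z)^2) with hB'
  -- differentiability
  have hfdiff : DifferentiableOn ℂ f (closedBall (0:ℂ) rr) := hf.mono hz1
  have hdfdiff : DifferentiableOn ℂ (deriv f) (closedBall (0:ℂ) rr) :=
    fun z hz => (hdf z (hz1 hz)).differentiableAt.differentiableWithinAt
  have hudiff : DifferentiableOn ℂ u (closedBall (0:ℂ) rr) :=
    fun z hz => ((hPrr z hz).1.2.2).differentiableAt.differentiableWithinAt
  have hdenomdiff : ∀ w' : ℂ, DifferentiableOn ℂ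
      (fun z => u z * (1 - w' * f z)) (closedBall (0:ℂ) rr) :=
    fun w' => hudiff.mul ((differentiableOn_const _).sub (hfdiff.const_mul w'))
  have hBdiff : ∀ w' ∈ closedBall w 1,
      DifferentiableOn ℂ (B w') (closedBall (0:ℂ) rr) := by
    intro w' hw'
    exact hdfdiff.div (hdenomdiff w')
      (fun z hz => mul_ne_zero (hune z hz) (hden0 w' hw' z hz))
  have hgdiff : DifferentiableOn ℂ g (closedBall (0:ℂ) rr) :=
    hfdiff.div ((differentiableOn_const _).sub (hfdiff.const_mul w))
      (fun z hz => hden0 w hwmem z hz)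
  have hdgdiff : DifferentiableOn ℂ (deriv g) (closedBall (0:ℂ) r) := by
    have h5 : AnalyticOnNhd ℂ g (ball (0:ℂ) rr) :=
      (hgdiff.mono ball_subset_closedBall).analyticOnNhd isOpen_ball
    exact fun z hz => (h5.deriv z (hrball hz)).differentiableAt.differentiableWithinAt
  -- power series on balls
  have hg_ball : HasFPowerSeriesOnBall g (cauchyPowerSeries g 0 r) 0 R :=
    (hgdiff.mono hr_subset).hasFPowerSeriesOnBall hRpos
  have hdg_ball : HasFPowerSeriesOnBall (deriv g) (cauchyPowerSeries (deriv g) 0 r) 0 R :=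
    hdgdiff.hasFPowerSeriesOnBall hRpos
  have hB_ball : ∀ w' ∈ closedBall w 1,
      HasFPowerSeriesOnBall (B w') (cauchyPowerSeries (B w') 0 r) 0 R :=
    fun w' hw' => ((hBdiff w' hw').mono hr_subset).hasFPowerSeriesOnBall hRpos
  -- the Faber polynomials give the power series of B w'
  have hBofS : ∀ w' ∈ closedBall w 1,
      HasFPowerSeriesAt (B w')
        (FormalMultilinearSeries.ofScalars ℂ (fun k => (F k).eval w')) 0 := by
    intro w' hw'
    rw [hasFPowerSeriesAt_iff]
    have hFe := hF w'
    rw [eventually_nhdsWithin_iff] at hFe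
    have hrr_nhds : closedBall (0:ℂ) rr ∈ 𝓝 (0:ℂ) := closedBall_mem_nhds _ hrrpos
    filter_upwards [hFe, hrr_nhds] with z hz hzrr
    simp only [ofScalars_coeff_aux, smul_eq_mul, zero_add]
    by_cases h0 : z = 0
    · subst h0
      have hB0 : B w' 0 = 1 := by simp [hB, hf0, hu0, hf1]
      rw [hB0]
      have hs : ∀ b : ℕ, b ≠ 0 → (fun k => (0:ℂ) ^ k * (F k).eval w') b = 0 := by
        intro b hb; simp [zero_pow hb]
      simpa [hF0] using hasSum_single (f := fun k => (0:ℂ) ^ k * (F k).eval w') 0 hs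
    · have hsum := hz (by simpa using h0)
      have hfz : f z = z * u z := hfu z (hz1 hzrr)
      have heq : z * deriv f z / (f z - w' * f z ^ 2) = B w' z := by
        have h2 : f z - w' * f z ^ 2 = z * (u z * (1 - w' * f z)) := by
          rw [hfz]; ring
        rw [hB]
        rw [h2, mul_div_mul_left _ _ h0]
      rw [heq] at hsum
      simpa [mul_comm] using hsum
  -- coefficients of B w' are Faber polynomial values
  have hcoeffB : ∀ w' ∈ closedBall w 1, ∀ k : ℕ,
      (F k).eval w' = (cauchyPowerSeries (B w') 0 r).coeff k := by
    intro w' hw' k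
    obtain ⟨R', hR'⟩ := hBofS w' hw'
    have e1 := coeff_eq_iteratedDeriv_aux hR' k
    have e2 := coeff_eq_iteratedDeriv_aux (hB_ball w' hw') k
    rw [ofScalars_coeff_aux] at e1
    rw [e1, e2]
  -- circle parametrization
  set e : ℝ → ℂ := fun θ => circleMap 0 r θ with he
  have he_ne : ∀ θ : ℝ, e θ ≠ 0 := fun θ => circleMap_ne_center hr.ne'
  have hmap : ∀ θ : ℝ, e θ ∈ closedBall (0:ℂ) rr := by
    intro θ
    apply hr_subset
    exact sphere_subset_closedBall (circleMap_mem_sphere 0 hr.le θ)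
  set A : ℕ → ℝ → ℂ := fun m θ => deriv (circleMap 0 r) θ * ((e θ)⁻¹ ^ m * (e θ)⁻¹) with hA
  -- coefficients as interval integrals
  have hJint : ∀ (h : ℂ → ℂ) (m : ℕ), (cauchyPowerSeries h 0 r).coeff m
      = (2 * ↑Real.pi * Complex.I)⁻¹ * ∫ θ in (0:ℝ)..2*Real.pi, A m θ * h (e θ) := by
    intro h m
    have h0 : (cauchyPowerSeries h 0 r).coeff m
        = cauchyPowerSeries h 0 r m (fun _ => 1) := rfl
    rw [h0, cauchyPowerSeries_apply]
    unfold circleIntegral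
    rw [smul_eq_mul]
    congr 1
    apply intervalIntegral.integral_congr
    intro θ _
    simp only [hA, smul_eq_mul, sub_zero, one_div, he]
    ring
  -- continuity facts
  have hcont_df : ContinuousOn (deriv f) (closedBall (0:ℂ) rr) :=
    hdfdiff.continuousOn
  have hcont_u : ContinuousOn u (closedBall (0:ℂ) rr) := hudiff.continuousOn
  have hcont_f : ContinuousOn f (closedBall (0:ℂ) rr) := hfdiff.continuousOn
  have ce : Continuous e := continuous_circleMap 0 r
  have cf : Continuous fun θ => f (e θ) := hcont_f.comp_continuous ce hmap
  have cd : Continuous fun θ => deriv f (e θ) := hcont_df.comp_continuous ce hmap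
  have cu : Continuous fun θ => u (e θ) := hcont_u.comp_continuous ce hmap
  have cderivmap : Continuous fun θ => deriv (circleMap 0 r) θ := by
    simp only [deriv_circleMap]
    exact (continuous_circleMap 0 r).mul continuous_const
  have cinv : Continuous fun θ => (e θ)⁻¹ := ce.inv₀ he_ne
  have cA : ∀ m : ℕ, Continuous (A m) := by
    intro m
    simp only [hA]
    exact cderivmap.mul ((cinv.pow m).mul cinv)
  have cB : ∀ w' ∈ closedBall w 1, Continuous fun θ => B w' (e θ) := by
    intro w' hw'
    simp only [hB]
    exact cd.div ((cu.mul (continuous_const.sub (continuous_const.mul cf))))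
      (fun θ => mul_ne_zero (hune _ (hmap θ)) (hden0 w' hw' _ (hmap θ)))
  have cB' : ∀ w' ∈ closedBall w 1, Continuous fun θ => B' w' (e θ) := by
    intro w' hw'
    simp only [hB']
    exact (cd.mul cf).div
      (((cu.mul (((continuous_const.sub (continuous_const.mul cf))).pow 2))))
      (fun θ => mul_ne_zero (hune _ (hmap θ))
        (pow_ne_zero 2 (hden0 w' hw' _ (hmap θ))))
  -- derivative of B in the parameter
  have hBderiv : ∀ w' ∈ ball w 1, ∀ z ∈ closedBall (0:ℂ) rr,
      HasDerivAt (fun w'' => B w'' z) (B' w' z) w' := by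
    intro w' hw' z hz
    have hw'c : w' ∈ closedBall w 1 := ball_subset_closedBall hw'
    have hv := hune z hz
    have hd0 := hden0 w' hw'c z hz
    have h1 : HasDerivAt (fun w'' : ℂ => u z * (1 - w'' * f z)) (-(u z * f z)) w' := by
      have h2 : HasDerivAt (fun w'' : ℂ => 1 - w'' * f z) (-(f z)) w' := by
        simpa using ((hasDerivAt_id w').mul_const (f z)).const_sub 1
      have := h2.const_mul (u z)
      simpa [mul_neg] using this
    have h2 := (hasDerivAt_const w' (deriv f z)).div h1 (mul_ne_zero hv hd0)
    simp only [hB, hB']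
    convert h2 using 1 <;> try rfl
    field_simp
    ring
  -- compactness bound
  have hK : IsCompact ((closedBall w 1) ×ˢ (Set.uIcc (0:ℝ) (2*Real.pi))) :=
    (isCompact_closedBall w 1).prod isCompact_uIcc
  have heval : ∀ n : ℕ,
      (Polynomial.derivative (F (n+1))).eval w
        = ((n:ℂ)+1) * (cauchyPowerSeries g 0 r).coeff (n+1) := by
    intro n
    set m : ℕ := n + 1 with hm
    -- continuity of the two-variable integrand
    have hψc : ContinuousOn (fun p : ℂ × ℝ => A m p.2 * B' p.1 (e p.2))
        ((closedBall w 1) ×ˢ (Set.uIcc (0:ℝ) (2*Real.pi))) := by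
      apply ContinuousOn.mul ((cA m).comp continuous_snd).continuousOn
      simp only [hB']
      apply ContinuousOn.div
      · exact ((cd.comp continuous_snd).mul (cf.comp continuous_snd)).continuousOn
      · exact ((cu.comp continuous_snd).mul
          ((continuous_const.sub (continuous_fst.mul (cf.comp continuous_snd))).pow 2)).continuousOn
      · rintro ⟨w', θ⟩ ⟨hw', -⟩
        exact mul_ne_zero (hune _ (hmap θ))
          (pow_ne_zero 2 (hden0 w' hw' _ (hmap θ)))
    obtain ⟨C, hC⟩ := hK.exists_bound_of_continuousOn hψc
    -- parametric differentiation
    have hparam := intervalIntegral.hasDerivAt_integral_of_dominated_loc_of_deriv_le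
      (μ := MeasureTheory.volume) (F := fun w' θ => A m θ * B w' (e θ))
      (F' := fun w' θ => A m θ * B' w' (e θ)) (x₀ := w) (s := ball w 1)
      (a := 0) (b := 2*Real.pi) (bound := fun _ => C)
      (ball_mem_nhds w one_pos)
      (by
        filter_upwards [closedBall_mem_nhds w one_pos] with w' hw'
        exact ((cA m).mul (cB w' hw')).aestronglyMeasurable.restrict)
      (((cA m).mul (cB w hwmem)).intervalIntegrable _ _)
      (((cA m).mul (cB' w hwmem)).aestronglyMeasurable.restrict)
      (by
        apply MeasureTheory.ae_of_all
        intro θ hθ w' hw'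
        exact hC ((w', θ))
          ⟨ball_subset_closedBall hw', uIoc_subset_uIcc hθ⟩)
      (intervalIntegrable_const)
      (by
        apply MeasureTheory.ae_of_all
        intro θ hθ w' hw'
        exact ((hBderiv w' hw' (e θ) (hmap θ))).const_mul (A m θ))
    have hkey : HasDerivAt (fun w' => (2 * ↑Real.pi * Complex.I)⁻¹ *
          ∫ θ in (0:ℝ)..2*Real.pi, A m θ * B w' (e θ))
        ((2 * ↑Real.pi * Complex.I)⁻¹ *
          ∫ θ in (0:ℝ)..2*Real.pi, A m θ * B' w (e θ)) w :=
      hparam.2.const_mul _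
    -- transfer to the polynomial
    have hEq : (fun w' => (F m).eval w') =ᶠ[𝓝 w]
        (fun w' => (2 * ↑Real.pi * Complex.I)⁻¹ *
          ∫ θ in (0:ℝ)..2*Real.pi, A m θ * B w' (e θ)) := by
      filter_upwards [closedBall_mem_nhds w one_pos] with w' hw'
      rw [hcoeffB w' hw' m, hJint (B w') m]
    have hder : HasDerivAt (fun w' => (F m).eval w')
        ((2 * ↑Real.pi * Complex.I)⁻¹ *
          ∫ θ in (0:ℝ)..2*Real.pi, A m θ * B' w (e θ)) w :=
      hkey.congr_of_eventuallyEq hEq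
    -- the derivative of g in z
    have hgderiv : ∀ z ∈ closedBall (0:ℂ) rr,
        HasDerivAt g (deriv f z / (1 - w * f z)^2) z := by
      intro z hz
      have hfz : HasDerivAt f (deriv f z) z :=
        (hf.differentiableAt (isOpen_ball.mem_nhds (hz1 hz))).hasDerivAt
      have hd0 := hden0 w hwmem z hz
      have h1 : HasDerivAt (fun z' => 1 - w * f z') (-(w * deriv f z)) z := by
        simpa using (hfz.const_mul w).const_sub 1
      have h2 := hfz.div h1 hd0
      simp only [hg]
      convert h2 using 1 <;> try rfl
      field_simp
      ring
    have hB'g : ∀ z ∈ closedBall (0:ℂ) rr, B' w z = z * deriv g z := by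
      intro z hz
      rw [(hgderiv z hz).deriv]
      simp only [hB']
      have hfz : f z = z * u z := hfu z (hz1 hz)
      have hv := hune z hz
      have hd0 := hden0 w hwmem z hz
      field_simp [hv, hd0]
      rw [hfz]
      ring
    -- identify the derivative value
    have hintval : (2 * ↑Real.pi * Complex.I)⁻¹ *
          (∫ θ in (0:ℝ)..2*Real.pi, A m θ * B' w (e θ))
        = ((n:ℂ)+1) * (cauchyPowerSeries g 0 r).coeff (n+1) := by
      have h1 : ∀ θ:ℝ, A m θ * B' w (e θ) = A n θ * deriv g (e θ) := by
        intro θ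
        rw [hB'g _ (hmap θ)]
        simp only [hA, hm]
        have hz0 := he_ne θ
        field_simp
        rw [pow_succ]; field_simp
      have h2 : (∫ θ in (0:ℝ)..2*Real.pi, A m θ * B' w (e θ))
          = ∫ θ in (0:ℝ)..2*Real.pi, A n θ * deriv g (e θ) := by
        apply intervalIntegral.integral_congr
        intro θ _
        exact h1 θ
      rw [h2, ← hJint (deriv g) n]
      rw [coeff_eq_iteratedDeriv_aux hdg_ball n,
        coeff_eq_iteratedDeriv_aux hg_ball (n+1)]
      rw [← iteratedDeriv_succ']
      rw [Nat.factorial_succ]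
      have hn1 : ((n:ℂ)+1) ≠ 0 := Nat.cast_add_one_ne_zero n
      have hnf : ((n.factorial : ℂ)) ≠ 0 := Nat.cast_ne_zero.mpr n.factorial_ne_zero
      push_cast
      field_simp
    rw [← Polynomial.deriv (p := F m), hder.deriv, hintval]
  -- final assembly
  have hcoeff0 : (cauchyPowerSeries g 0 r).coeff 0 = 0 := by
    rw [coeff_eq_iteratedDeriv_aux hg_ball 0]
    simp [iteratedDeriv_zero, hg, hf0]
  filter_upwards [ball_mem_nhds (0:ℂ) hr] with z hz
  have hzmem : z ∈ Metric.eball (0:ℂ) (R : ENNReal) := by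
    rw [Metric.mem_eball, edist_zero_right, enorm_eq_nnnorm]
    have hzr : ‖z‖ < r := mem_ball_zero_iff.mp hz
    rw [ENNReal.coe_lt_coe, ← NNReal.coe_lt_coe]
    exact hzr
  have hs := hg_ball.hasSum hzmem
  rw [zero_add] at hs
  have hs2 : HasSum (fun k => z ^ k • (cauchyPowerSeries g 0 r).coeff k) (g z) := by
    simpa [FormalMultilinearSeries.apply_eq_pow_smul_coeff] using hs
  have hs3 := (hasSum_nat_add_iff' 1).mpr hs2
  simp only [Finset.range_one, Finset.sum_singleton, pow_zero, one_smul, hcoeff0,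
    sub_zero] at hs3
  have hterm : ∀ k : ℕ,
      (Polynomial.derivative (F (k+1))).eval w / ((k:ℂ)+1) * z^(k+1)
        = z ^ (k+1) • (cauchyPowerSeries g 0 r).coeff (k+1) := by
    intro k
    rw [heval k, smul_eq_mul]
    have hk1 : ((k:ℂ)+1) ≠ 0 := Nat.cast_add_one_ne_zero k
    field_simp
  show HasSum _ (g z)
  convert hs3 using 1 <;> try rfl
  funext k
  exact hterm k
end

section
/- For every integer p ≥ 2, a_p^p = (p+1) c_p − [ β_{p−1,1} + 2 c_1 β_{p−2,1} + 3 c_2 β_{p−3,1} + ... + (p−1) c_{p−2} β_{1,1} ], and a_1^1 = 2 c_1. -/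
open Topology Filter Metric Set

/-- Coefficients of an `ofScalars` series. -/
lemma ofScalars_coeff_eq (A : ℕ → ℂ) (n : ℕ) :
    (FormalMultilinearSeries.ofScalars ℂ A).coeff n = A n := by
  show (FormalMultilinearSeries.ofScalars ℂ A) n (fun _ => (1:ℂ)) = A n
  rw [FormalMultilinearSeries.ofScalars_apply_eq]
  simp

/-- `g` is represented by the power series with coefficients `A` on a punctured
neighborhood of `0`. -/
def RepP (A : ℕ → ℂ) (g : ℂ → ℂ) : Prop :=
  ∀ᶠ z in 𝓝[≠] (0:ℂ), HasSum (fun n : ℕ => A n * z ^ n) (g z)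

lemma repP_hasFPowerSeriesAt {A : ℕ → ℂ} {g : ℂ → ℂ} (h : RepP A g) :
    HasFPowerSeriesAt (Function.update g 0 (A 0)) (FormalMultilinearSeries.ofScalars ℂ A) 0 := by
  rw [hasFPowerSeriesAt_iff]
  rw [RepP, eventually_nhdsWithin_iff] at h
  filter_upwards [h] with z hz
  rw [show (0:ℂ) + z = z from zero_add z]
  simp only [ofScalars_coeff_eq]
  rcases eq_or_ne z 0 with rfl | hz0
  · have hfun : (fun n : ℕ => (0:ℂ) ^ n • A n) = (fun n => if n = 0 then A 0 else 0) := by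
      funext n; cases n <;> simp
    rw [hfun, Function.update_self]
    exact hasSum_ite_eq 0 (A 0)
  · rw [Function.update_of_ne hz0]
    have := hz (by simpa using hz0)
    simpa [smul_eq_mul, mul_comm] using this

lemma repP_congr {A : ℕ → ℂ} {g h : ℂ → ℂ} (hA : RepP A g)
    (hgh : ∀ᶠ z in 𝓝[≠] (0:ℂ), g z = h z) : RepP A h := by
  filter_upwards [hA, hgh] with z h1 h2; rwa [h2] at h1

lemma repP_coeff_congr {A B : ℕ → ℂ} {g : ℂ → ℂ} (hA : RepP A g) (hAB : ∀ n, A n = B n) :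
    RepP B g := (funext hAB : A = B) ▸ hA

lemma repP_unique {A B : ℕ → ℂ} {g : ℂ → ℂ} (hA : RepP A g) (hB : RepP B g) : A = B := by
  have hA' := repP_hasFPowerSeriesAt hA
  have hB' := repP_hasFPowerSeriesAt hB
  have e1 : ∀ᶠ z in 𝓝[≠] (0:ℂ), Function.update g 0 (A 0) z = g z := by
    filter_upwards [self_mem_nhdsWithin] with z hz
    exact Function.update_of_ne hz _ _
  have e2 : ∀ᶠ z in 𝓝[≠] (0:ℂ), Function.update g 0 (B 0) z = g z := by
    filter_upwards [self_mem_nhdsWithin] with z hz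
    exact Function.update_of_ne hz _ _
  have t1 : Filter.Tendsto g (𝓝[≠] (0:ℂ)) (𝓝 (A 0)) := by
    have := hA'.continuousAt.tendsto.mono_left
      (nhdsWithin_le_nhds : 𝓝[≠] (0:ℂ) ≤ 𝓝 0)
    rw [Function.update_self] at this
    exact this.congr' e1
  have t2 : Filter.Tendsto g (𝓝[≠] (0:ℂ)) (𝓝 (B 0)) := by
    have := hB'.continuousAt.tendsto.mono_left
      (nhdsWithin_le_nhds : 𝓝[≠] (0:ℂ) ≤ 𝓝 0)
    rw [Function.update_self] at this
    exact this.congr' e2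
  have h0 : A 0 = B 0 := tendsto_nhds_unique t1 t2
  have hB'' : HasFPowerSeriesAt (Function.update g 0 (A 0))
      (FormalMultilinearSeries.ofScalars ℂ B) 0 := by rw [h0]; exact hB'
  have hpq := hA'.eq_formalMultilinearSeries hB''
  funext n
  rw [← ofScalars_coeff_eq A n, hpq, ofScalars_coeff_eq]

lemma hasFPowerSeriesAt_repP {g : ℂ → ℂ} {p : FormalMultilinearSeries ℂ ℂ ℂ}
    (hp : HasFPowerSeriesAt g p 0) : RepP (fun n => p.coeff n) g := by
  rw [hasFPowerSeriesAt_iff] at hp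
  have := hp.filter_mono (nhdsWithin_le_nhds : 𝓝[≠] (0:ℂ) ≤ 𝓝 0)
  filter_upwards [this] with z hz
  rw [show (0:ℂ) + z = z from zero_add z] at hz
  simpa [smul_eq_mul, mul_comm] using hz

lemma analyticAt_repP {g : ℂ → ℂ} (hg : AnalyticAt ℂ g 0) :
    ∃ A : ℕ → ℂ, RepP A g ∧ A 0 = g 0 ∧ A 1 = deriv g 0 := by
  obtain ⟨p, hp⟩ := hg
  refine ⟨fun n => p.coeff n, hasFPowerSeriesAt_repP hp, ?_, ?_⟩
  · exact hp.coeff_zero 1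
  · rw [hp.deriv]; rfl

lemma repP_deriv {A : ℕ → ℂ} {g : ℂ → ℂ} (h : RepP A g) :
    RepP (fun n => ((n:ℂ) + 1) * A (n + 1)) (deriv g) := by
  obtain ⟨r, hr⟩ := repP_hasFPowerSeriesAt h
  have hd := hr.fderiv
  have hball : ∀ᶠ z in 𝓝[≠] (0:ℂ), z ∈ EMetric.ball (0:ℂ) r :=
    eventually_nhdsWithin_of_eventually_nhds
      (eventually_mem_set.mpr (EMetric.ball_mem_nhds 0 hr.r_pos))
  filter_upwards [hball, self_mem_nhdsWithin] with z hzr hz0'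
  have hz0 : z ≠ 0 := hz0'
  have h1 := (hd.hasSum hzr).mapL (ContinuousLinearMap.apply ℂ ℂ z)
  have hterm : ∀ n : ℕ, (ContinuousLinearMap.apply ℂ ℂ z)
      ((FormalMultilinearSeries.ofScalars ℂ A).derivSeries n fun _ => z)
      = (((n:ℂ) + 1) * A (n + 1)) * z ^ (n + 1) := by
    intro n
    rw [ContinuousLinearMap.apply_apply, FormalMultilinearSeries.derivSeries_apply_diag,
      FormalMultilinearSeries.ofScalars_apply_eq]
    push_cast [nsmul_eq_mul, smul_eq_mul]
    ring
  simp only [hterm, ContinuousLinearMap.apply_apply] at h1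
  have hSg : deriv (Function.update g 0 (A 0)) z = deriv g z := by
    apply Filter.EventuallyEq.deriv_eq
    filter_upwards [isOpen_compl_singleton.mem_nhds (by simpa using hz0)] with w hw
    exact Function.update_of_ne hw _ _
  have hfd : (fderiv ℂ (Function.update g 0 (A 0)) ((0:ℂ) + z)) z = z * deriv g z := by
    rw [show (0:ℂ) + z = z from zero_add z]
    have h2 := (fderiv ℂ (Function.update g 0 (A 0)) z).map_smul z (1:ℂ)
    rw [smul_eq_mul, mul_one] at h2
    rw [h2, fderiv_apply_one_eq_deriv, hSg, smul_eq_mul]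
  rw [hfd] at h1
  have h2 := h1.mul_right z⁻¹
  have heq : (fun (n : ℕ) => ((n:ℂ) + 1) * A (n + 1) * z ^ (n + 1) * z⁻¹)
      = fun (n : ℕ) => ((n:ℂ) + 1) * A (n + 1) * z ^ n := by
    funext n; rw [pow_succ]; field_simp
  rw [heq] at h2
  have h3 : z * deriv g z * z⁻¹ = deriv g z := by field_simp
  rwa [h3] at h2

lemma repP_mul {A B : ℕ → ℂ} {g h : ℂ → ℂ} (hA : RepP A g) (hB : RepP B h) :
    RepP (fun n => ∑ k ∈ Finset.range (n + 1), A k * B (n - k)) (fun z => g z * h z) := by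
  filter_upwards [hA, hB] with z h1 h2
  have s1 : Summable fun n => ‖A n * z ^ n‖ := h1.summable.norm
  have s2 : Summable fun n => ‖B n * z ^ n‖ := h2.summable.norm
  have H := hasSum_sum_range_mul_of_summable_norm s1 s2
  rw [h1.tsum_eq, h2.tsum_eq] at H
  have heq : (fun n => ∑ k ∈ Finset.range (n + 1), (A k * z ^ k) * (B (n - k) * z ^ (n - k)))
      = fun n => (∑ k ∈ Finset.range (n + 1), A k * B (n - k)) * z ^ n := by
    funext n
    rw [Finset.sum_mul]
    refine Finset.sum_congr rfl fun k hk => ?_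
    rw [Finset.mem_range] at hk
    have hkn : k + (n - k) = n := Nat.add_sub_cancel' (Nat.lt_succ_iff.mp hk)
    calc A k * z ^ k * (B (n - k) * z ^ (n - k))
        = A k * B (n - k) * (z ^ k * z ^ (n - k)) := by ring
      _ = A k * B (n - k) * z ^ n := by rw [← pow_add, hkn]
  rw [heq] at H
  exact H

/-- Prepend a coefficient to a coefficient sequence. -/
def shiftCoeff (w : ℂ) (A : ℕ → ℂ) : ℕ → ℂ := fun n => Nat.casesOn n w A

@[simp] lemma shiftCoeff_zero (w : ℂ) (A : ℕ → ℂ) : shiftCoeff w A 0 = w := rfl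
@[simp] lemma shiftCoeff_succ (w : ℂ) (A : ℕ → ℂ) (n : ℕ) : shiftCoeff w A (n + 1) = A n := rfl

lemma repP_shift {A : ℕ → ℂ} {g : ℂ → ℂ} (w : ℂ)
    (h : ∀ᶠ z in 𝓝[≠] (0:ℂ), HasSum (fun n : ℕ => A n * z ^ (n + 1)) (g z)) :
    RepP (shiftCoeff w A) (fun z => g z + w) := by
  filter_upwards [h] with z hz
  have h2 : HasSum (fun n => shiftCoeff w A (n + 1) * z ^ (n + 1)) (g z) := by
    simpa using hz
  have := (hasSum_nat_add_iff (f := fun n => shiftCoeff w A n * z ^ n) 1).mp h2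
  simpa using this
/-- With `a_p^p` defined by `z² f'(z)²/f(z)² = 1 + ∑_{p≥1} a_p^p z^p` and with
`β_{n,k}` the Grunsky coefficients of `h(z) = 1/f(1/z)`:
`a_1^1 = 2c_1` and for `p ≥ 2`,
`a_p^p = (p+1) c_p - [β_{p-1,1} + 2c_1 β_{p-2,1} + ⋯ + (p-1) c_{p-2} β_{1,1}]`. -/
theorem stmt_10 (f : ℂ → ℂ) (c : ℕ → ℂ)
    (hf : DifferentiableOn ℂ f (ball (0 : ℂ) 1))
    (hinj : Set.InjOn f (ball (0 : ℂ) 1))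
    (hf0 : f 0 = 0) (hf1 : deriv f 0 = 1) (hc0 : c 0 = 1)
    (hc : ∀ z ∈ ball (0 : ℂ) 1, HasSum (fun n : ℕ => c n * z ^ (n + 1)) (f z))
    (a : ℕ → ℂ) (ha0 : a 0 = 1)
    (ha : ∀ᶠ z in 𝓝[≠] (0 : ℂ),
      HasSum (fun p : ℕ => a p * z ^ p) (z ^ 2 * (deriv f z) ^ 2 / (f z) ^ 2))
    (β : ℕ → ℕ → ℂ)
    (hβ : ∃ ε > (0 : ℝ), ∀ u v : ℂ, u ≠ 0 → v ≠ 0 → ‖u‖ < ε → ‖v‖ < ε → u ≠ v →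
      HasSum (fun nk : ℕ × ℕ =>
          -((1 / ((nk.1 : ℂ) + 1)) * β (nk.1 + 1) (nk.2 + 1) * u ^ (nk.1 + 1) * v ^ (nk.2 + 1)))
        (Complex.log (((f u)⁻¹ - (f v)⁻¹) / (u⁻¹ - v⁻¹)))) :
    a 1 = 2 * c 1 ∧
      ∀ p : ℕ, 2 ≤ p →
        a p = ((p : ℂ) + 1) * c p -
          ∑ j ∈ Finset.range (p - 1), ((j : ℂ) + 1) * c j * β (p - 1 - j) 1 := by
  classical
  have h01 : (0:ℂ) ∈ ball (0:ℂ) 1 := mem_ball_self one_pos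
  have hball1 : ∀ᶠ z in 𝓝[≠] (0:ℂ), z ∈ ball (0:ℂ) 1 :=
    eventually_nhdsWithin_of_eventually_nhds
      (eventually_mem_set.mpr (isOpen_ball.mem_nhds h01))
  have hne0 : ∀ᶠ z in 𝓝[≠] (0:ℂ), z ≠ (0:ℂ) := by
    filter_upwards [self_mem_nhdsWithin] with z hz; exact hz
  have hfd : ∀ z ∈ ball (0:ℂ) 1, HasDerivAt f (deriv f z) z := fun z hz =>
    (hf.differentiableAt (isOpen_ball.mem_nhds hz)).hasDerivAt
  have hfana : AnalyticAt ℂ f 0 := hf.analyticAt (isOpen_ball.mem_nhds h01)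
  have hne : ∀ᶠ z in 𝓝[≠] (0:ℂ), f z ≠ 0 := by
    filter_upwards [hball1, hne0] with z hz hz0
    intro hfz
    exact hz0 (hinj hz h01 (by rw [hfz, hf0]))
  -- Step 1 : power series of f
  have hAf : RepP (shiftCoeff 0 c) f := by
    have h1 : ∀ᶠ z in 𝓝[≠] (0:ℂ), HasSum (fun n : ℕ => c n * z ^ (n + 1)) (f z) := by
      filter_upwards [hball1] with z hz; exact hc z hz
    exact repP_congr (repP_shift 0 h1) (Eventually.of_forall fun z => add_zero _)
  -- Step 2 : power series of deriv f
  have hE : RepP (fun n => ((n:ℂ) + 1) * c n) (deriv f) :=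
    repP_coeff_congr (repP_deriv hAf) (fun n => by simp)
  -- Step 3 : the Grunsky column extraction
  have hgrun : ∀ᶠ u in 𝓝[≠] (0:ℂ),
      HasSum (fun n : ℕ => -((1 / ((n : ℂ) + 1)) * β (n + 1) 1) * u ^ (n + 1))
        (u⁻¹ - (f u)⁻¹ - c 1) := by
    obtain ⟨ε, hεpos, hβ'⟩ := hβ
    -- the function z ↦ f z / z and its analytic continuation SU
    have hU : RepP c (fun z => f z * z⁻¹) := by
      filter_upwards [hball1, hne0] with z hz hz0
      have h1 := (hc z hz).mul_right z⁻¹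
      have heq : (fun n : ℕ => c n * z ^ (n + 1) * z⁻¹) = fun n : ℕ => c n * z ^ n := by
        funext n; rw [pow_succ, mul_assoc, mul_assoc, mul_inv_cancel₀ hz0, mul_one]
      rwa [heq] at h1
    obtain ⟨SU, hSUdef⟩ : ∃ SU : ℂ → ℂ,
        SU = Function.update (fun z => f z * z⁻¹) 0 (c 0) := ⟨_, rfl⟩
    have hSUp : HasFPowerSeriesAt SU (FormalMultilinearSeries.ofScalars ℂ c) 0 := by
      rw [hSUdef]; exact repP_hasFPowerSeriesAt hU
    have hSU0 : SU 0 = 1 := by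
      rw [hSUdef, Function.update_self]; exact hc0
    have hSUne : SU 0 ≠ 0 := by rw [hSU0]; exact one_ne_zero
    have hSUd : HasDerivAt SU (c 1) 0 := by
      have h1 := hSUp.hasDerivAt
      have h2 : ((FormalMultilinearSeries.ofScalars ℂ c) 1 fun _ => (1:ℂ)) = c 1 :=
        ofScalars_coeff_eq c 1
      rwa [h2] at h1
    have hWana : AnalyticAt ℂ (fun z => (SU z)⁻¹) 0 := hSUp.analyticAt.inv hSUne
    have hW0 : (SU 0)⁻¹ = 1 := by rw [hSU0]; exact inv_one
    have hWd : HasDerivAt (fun z => (SU z)⁻¹) (-(c 1)) 0 := by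
      have h1 := hSUd.inv hSUne
      rwa [hSU0, one_pow, div_one] at h1
    have hWev : ∀ᶠ z in 𝓝[≠] (0:ℂ), (SU z)⁻¹ = z * (f z)⁻¹ := by
      filter_upwards [hne0] with z hz0
      simp only [hSUdef, Function.update_of_ne hz0]
      rw [mul_inv_rev, inv_inv]
    have hεev : ∀ᶠ z in 𝓝[≠] (0:ℂ), ‖z‖ < ε :=
      eventually_nhdsWithin_of_eventually_nhds (by
        filter_upwards [eventually_mem_set.mpr (ball_mem_nhds (0:ℂ) hεpos)] with z hz
        rwa [mem_ball_zero_iff] at hz)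
    -- now fix u
    filter_upwards [hεev, hball1, hne0, hne] with u huε hub hu0 hfu
    have hupos : (0:ℝ) < ‖u‖ := norm_pos_iff.mpr hu0
    have huev : ∀ᶠ v in 𝓝[≠] (0:ℂ), ‖v‖ < ‖u‖ :=
      eventually_nhdsWithin_of_eventually_nhds (by
        filter_upwards [eventually_mem_set.mpr (ball_mem_nhds (0:ℂ) hupos)] with v hv
        rwa [mem_ball_zero_iff] at hv)
    obtain ⟨Bk, hBkdef⟩ : ∃ Bk : ℕ → ℂ,
        Bk = fun k => ∑' n : ℕ, -((1 / ((n : ℂ) + 1)) * β (n + 1) (k + 1) * u ^ (n + 1)) :=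
      ⟨_, rfl⟩
    -- the v-series of the logarithm
    have hLsum : ∀ᶠ v in 𝓝[≠] (0:ℂ), HasSum (fun k : ℕ => Bk k * v ^ (k + 1))
        (Complex.log (((f u)⁻¹ - (f v)⁻¹) / (u⁻¹ - v⁻¹))) := by
      filter_upwards [hεev, huev, hne0] with v hvε hvu hv0
      have hvune : u ≠ v := by intro h; rw [← h] at hvu; exact lt_irrefl _ hvu
      have H := hβ' u v hu0 hv0 huε hvε hvune
      have Hsw : HasSum (fun kn : ℕ × ℕ =>
          -((1 / ((kn.2 : ℂ) + 1)) * β (kn.2 + 1) (kn.1 + 1) * u ^ (kn.2 + 1) * v ^ (kn.1 + 1)))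
          (Complex.log (((f u)⁻¹ - (f v)⁻¹) / (u⁻¹ - v⁻¹))) := by
        have h1 := (Equiv.prodComm ℕ ℕ).hasSum_iff.mpr H
        simpa [Function.comp_def, Equiv.prodComm_apply] using h1
      refine Hsw.prod_fiberwise fun k => ?_
      have hinj2 : Function.Injective (fun n : ℕ => (n, k)) := fun a b hab =>
        congrArg Prod.fst hab
      have hs : Summable (fun n : ℕ =>
          -((1 / ((n : ℂ) + 1)) * β (n + 1) (k + 1) * u ^ (n + 1) * v ^ (k + 1))) := by
        have h1 := H.summable.comp_injective hinj2
        simpa [Function.comp_def] using h1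
      have hvk : (v : ℂ) ^ (k + 1) ≠ 0 := pow_ne_zero _ hv0
      have hs2 : Summable (fun n : ℕ =>
          -((1 / ((n : ℂ) + 1)) * β (n + 1) (k + 1) * u ^ (n + 1))) := by
        have h2 := hs.mul_right (v ^ (k + 1))⁻¹
        have heq : (fun n : ℕ =>
            -((1 / ((n : ℂ) + 1)) * β (n + 1) (k + 1) * u ^ (n + 1) * v ^ (k + 1)) * (v ^ (k + 1))⁻¹)
            = fun n : ℕ => -((1 / ((n : ℂ) + 1)) * β (n + 1) (k + 1) * u ^ (n + 1)) := by
          funext n; rw [neg_mul, mul_assoc, mul_inv_cancel₀ hvk, mul_one]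
        rwa [heq] at h2
      have h3 := hs2.hasSum.mul_right (v ^ (k + 1))
      have heq2 : (fun n : ℕ =>
          -((1 / ((n : ℂ) + 1)) * β (n + 1) (k + 1) * u ^ (n + 1)) * v ^ (k + 1))
          = fun n : ℕ =>
          -((1 / ((n : ℂ) + 1)) * β (n + 1) (k + 1) * u ^ (n + 1) * v ^ (k + 1)) := by
        funext n; ring
      rw [heq2] at h3
      rw [hBkdef]
      exact h3
    -- the analytic extension of the argument of the logarithm
    have h0u : (0:ℂ) - u ≠ 0 := by simpa using hu0
    have hMana : AnalyticAt ℂ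
        (fun v => (SU v)⁻¹ * ((f v - f u) * (f u)⁻¹) * (u * (v - u)⁻¹)) 0 :=
      (hWana.mul ((hfana.sub analyticAt_const).mul analyticAt_const)).mul
        (analyticAt_const.mul ((analyticAt_id.sub analyticAt_const).inv h0u))
    have hM0 : (SU 0)⁻¹ * ((f 0 - f u) * (f u)⁻¹) * (u * ((0:ℂ) - u)⁻¹) = 1 := by
      rw [hW0, hf0]
      field_simp
      ring
    have hMslit : (SU 0)⁻¹ * ((f 0 - f u) * (f u)⁻¹) * (u * ((0:ℂ) - u)⁻¹)
        ∈ Complex.slitPlane := by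
      rw [hM0]; exact Complex.one_mem_slitPlane
    have hfd0 : HasDerivAt f 1 0 := by
      have h1 := hfd 0 h01; rwa [hf1] at h1
    have hd2 : HasDerivAt (fun v => (f v - f u) * (f u)⁻¹) (1 * (f u)⁻¹) 0 :=
      (hfd0.sub_const (f u)).mul_const (f u)⁻¹
    have hd3 : HasDerivAt (fun v => u * (v - u)⁻¹) (u * (-1 / ((0:ℂ) - u) ^ 2)) 0 := by
      exact (((hasDerivAt_id (0:ℂ)).sub_const u).inv h0u).const_mul u
    have hMd : HasDerivAt (fun v => (SU v)⁻¹ * ((f v - f u) * (f u)⁻¹) * (u * (v - u)⁻¹))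
        ((-(c 1) * ((f 0 - f u) * (f u)⁻¹) + (SU 0)⁻¹ * (1 * (f u)⁻¹)) * (u * ((0:ℂ) - u)⁻¹)
          + (SU 0)⁻¹ * ((f 0 - f u) * (f u)⁻¹) * (u * (-1 / ((0:ℂ) - u) ^ 2))) 0 := by
      exact (hWd.mul hd2).mul hd3
    have hlog : HasDerivAt
        (fun v => Complex.log ((SU v)⁻¹ * ((f v - f u) * (f u)⁻¹) * (u * (v - u)⁻¹)))
        (((-(c 1) * ((f 0 - f u) * (f u)⁻¹) + (SU 0)⁻¹ * (1 * (f u)⁻¹)) * (u * ((0:ℂ) - u)⁻¹)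
          + (SU 0)⁻¹ * ((f 0 - f u) * (f u)⁻¹) * (u * (-1 / ((0:ℂ) - u) ^ 2)))
          / ((SU 0)⁻¹ * ((f 0 - f u) * (f u)⁻¹) * (u * ((0:ℂ) - u)⁻¹))) 0 := by
      exact hMd.clog hMslit
    have hΛana : AnalyticAt ℂ
        (fun v => Complex.log ((SU v)⁻¹ * ((f v - f u) * (f u)⁻¹) * (u * (v - u)⁻¹))) 0 := by
      have h1 : AnalyticAt ℂ Complex.log
          ((fun v => (SU v)⁻¹ * ((f v - f u) * (f u)⁻¹) * (u * (v - u)⁻¹)) 0) :=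
        analyticAt_clog hMslit
      exact AnalyticAt.comp (g := Complex.log)
        (f := fun v => (SU v)⁻¹ * ((f v - f u) * (f u)⁻¹) * (u * (v - u)⁻¹)) (x := (0:ℂ))
        h1 hMana
    obtain ⟨Ac, hAcrep, hAc0, hAc1⟩ := analyticAt_repP hΛana
    have hagree : ∀ᶠ v in 𝓝[≠] (0:ℂ),
        Complex.log (((f u)⁻¹ - (f v)⁻¹) / (u⁻¹ - v⁻¹)) + 0
          = Complex.log ((SU v)⁻¹ * ((f v - f u) * (f u)⁻¹) * (u * (v - u)⁻¹)) := by
      filter_upwards [hWev, hne, hne0, huev] with v hWv hfv hv0 hvu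
      have hvune : v ≠ u := by intro h; rw [h] at hvu; exact lt_irrefl _ hvu
      have hvu' : v - u ≠ 0 := sub_ne_zero.mpr hvune
      have hiuv : u⁻¹ - v⁻¹ ≠ 0 := by
        rw [sub_ne_zero]
        intro h
        exact hvune (by rw [← inv_inv v, ← h, inv_inv])
      rw [add_zero]
      congr 1
      rw [hWv]
      field_simp
    have hRepΛ : RepP (shiftCoeff 0 Bk)
        (fun v => Complex.log ((SU v)⁻¹ * ((f v - f u) * (f u)⁻¹) * (u * (v - u)⁻¹))) :=
      repP_congr (repP_shift 0 hLsum) hagree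
    have hcoef := repP_unique hRepΛ hAcrep
    have hBk0 : Bk 0 = u⁻¹ - (f u)⁻¹ - c 1 := by
      have h1 : Bk 0 = Ac 1 := by rw [← hcoef]; rfl
      rw [h1, hAc1, hlog.deriv, hf0, hW0]
      field_simp
      ring
    -- summability of the first column at u, via the particular point v = u/2
    have hu2ne : u / 2 ≠ 0 := div_ne_zero hu0 two_ne_zero
    have hu2ε : ‖u / 2‖ < ε := by
      rw [norm_div]
      refine lt_of_le_of_lt ?_ huε
      rw [show ‖(2:ℂ)‖ = 2 by norm_num]
      exact half_le_self (norm_nonneg u)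
    have hune2 : u ≠ u / 2 := by
      intro h
      apply hu0
      field_simp at h
      norm_num at h
    have H2 := hβ' u (u / 2) hu0 hu2ne huε hu2ε hune2
    have hinj2 : Function.Injective (fun n : ℕ => (n, 0)) := fun a b hab =>
      congrArg Prod.fst hab
    have hs : Summable (fun n : ℕ =>
        -((1 / ((n : ℂ) + 1)) * β (n + 1) (0 + 1) * u ^ (n + 1) * (u / 2) ^ (0 + 1))) := by
      have h1 := H2.summable.comp_injective hinj2
      refine h1.congr fun n => ?_
      simp [Function.comp_def]
    have hu2k : ((u / 2 : ℂ)) ^ (0 + 1) ≠ 0 := pow_ne_zero _ hu2ne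
    have hsg : Summable (fun n : ℕ =>
        -((1 / ((n : ℂ) + 1)) * β (n + 1) (0 + 1) * u ^ (n + 1))) := by
      have h2 := hs.mul_right ((u / 2) ^ (0 + 1))⁻¹
      have heq : (fun n : ℕ =>
          -((1 / ((n : ℂ) + 1)) * β (n + 1) (0 + 1) * u ^ (n + 1) * (u / 2) ^ (0 + 1))
            * ((u / 2) ^ (0 + 1))⁻¹)
          = fun n : ℕ => -((1 / ((n : ℂ) + 1)) * β (n + 1) (0 + 1) * u ^ (n + 1)) := by
        funext n; rw [neg_mul, mul_assoc, mul_inv_cancel₀ hu2k, mul_one]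
      rwa [heq] at h2
    have hfin : HasSum (fun n : ℕ =>
        -((1 / ((n : ℂ) + 1)) * β (n + 1) (0 + 1) * u ^ (n + 1))) (Bk 0) := by
      rw [hBkdef]
      exact hsg.hasSum
    rw [hBk0] at hfin
    have heqf : (fun n : ℕ => -((1 / ((n : ℂ) + 1)) * β (n + 1) 1) * u ^ (n + 1))
        = fun n : ℕ => -((1 / ((n : ℂ) + 1)) * β (n + 1) (0 + 1) * u ^ (n + 1)) := by
      funext n
      simp [neg_mul, mul_assoc]
    rw [heqf]
    exact hfin

  -- Step 4 : power series of ψ = 1/z - 1/f(z)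
  have hψ : RepP (shiftCoeff (c 1) (fun n => -((1 / ((n : ℂ) + 1)) * β (n + 1) 1)))
      (fun z => z⁻¹ - (f z)⁻¹) := by
    have := repP_shift (c 1) (g := fun u => u⁻¹ - (f u)⁻¹ - c 1) hgrun
    exact repP_congr this (Eventually.of_forall fun z => by ring)
  -- Step 5 : power series of deriv ψ
  have hψd : RepP (fun n => -β (n + 1) 1) (deriv (fun z => z⁻¹ - (f z)⁻¹)) := by
    refine repP_coeff_congr (repP_deriv hψ) (fun n => ?_)
    have hn : ((n:ℂ) + 1) ≠ 0 := Nat.cast_add_one_ne_zero n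
    simp only [shiftCoeff_succ]
    field_simp
  -- Step 6 : power series of z^2 f'(z)/f(z)^2
  have hG2 : RepP (shiftCoeff 1 (shiftCoeff 0 (fun n => -β (n + 1) 1)))
      (fun z => z ^ 2 * deriv f z / f z ^ 2) := by
    have s1 : ∀ᶠ z in 𝓝[≠] (0:ℂ),
        HasSum (fun n : ℕ => (fun k => -β (k + 1) 1) n * z ^ (n + 1))
          (z * deriv (fun w => w⁻¹ - (f w)⁻¹) z) := by
      filter_upwards [hψd] with z hz
      have h2 := hz.mul_left z
      have heq : (fun n : ℕ => z * (-β (n + 1) 1 * z ^ n))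
          = fun n : ℕ => (fun k => -β (k + 1) 1) n * z ^ (n + 1) := by
        funext n; rw [pow_succ]; ring
      rwa [heq] at h2
    have s1' := repP_shift 0 s1
    have s2 : ∀ᶠ z in 𝓝[≠] (0:ℂ),
        HasSum (fun n : ℕ => shiftCoeff 0 (fun k => -β (k + 1) 1) n * z ^ (n + 1))
          (z * (z * deriv (fun w => w⁻¹ - (f w)⁻¹) z + 0)) := by
      filter_upwards [s1'] with z hz
      have h2 := hz.mul_left z
      have heq : (fun n : ℕ => z * (shiftCoeff 0 (fun k => -β (k + 1) 1) n * z ^ n))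
          = fun n : ℕ => shiftCoeff 0 (fun k => -β (k + 1) 1) n * z ^ (n + 1) := by
        funext n; rw [pow_succ]; ring
      rwa [heq] at h2
    have s2' := repP_shift 1 s2
    refine repP_congr s2' ?_
    filter_upwards [hball1, hne0, hne] with z hzb hz0 hfz
    have hdψ : deriv (fun w => w⁻¹ - (f w)⁻¹) z
        = -(z ^ 2)⁻¹ - -(deriv f z) / f z ^ 2 := by
      exact ((hasDerivAt_inv hz0).sub ((hfd z hzb).inv hfz)).deriv
    rw [hdψ]
    field_simp [hfz]
    ring
  -- Step 7 : multiply the two series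
  have hT : RepP (fun n => ∑ k ∈ Finset.range (n + 1),
        shiftCoeff 1 (shiftCoeff 0 (fun j => -β (j + 1) 1)) k * (((n - k : ℕ) : ℂ) + 1) * c (n - k))
      (fun z => z ^ 2 * (deriv f z) ^ 2 / (f z) ^ 2) := by
    have h1 := repP_mul hG2 hE
    have h2 := repP_congr h1 (Eventually.of_forall (fun z =>
      show (z ^ 2 * deriv f z / f z ^ 2) * deriv f z = z ^ 2 * (deriv f z) ^ 2 / (f z) ^ 2 by
        ring))
    refine repP_coeff_congr h2 (fun n => ?_)
    refine Finset.sum_congr rfl fun k _ => by ring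
  have haT := repP_unique (ha : RepP a _) hT
  constructor
  · rw [congrFun haT 1]
    rw [Finset.sum_range_succ, Finset.sum_range_succ, Finset.sum_range_zero]
    simp only [shiftCoeff_zero, shiftCoeff_succ]
    norm_num
  · intro p hp
    obtain ⟨q, rfl⟩ : ∃ q, p = q + 2 := ⟨p - 2, by omega⟩
    rw [congrFun haT (q + 2)]
    rw [show q + 2 + 1 = (q + 1) + 1 + 1 from rfl]
    rw [Finset.sum_range_succ' _ ((q + 1) + 1), Finset.sum_range_succ' _ (q + 1)]
    have hidx : ∀ i, q + 2 - (i + 1 + 1) = q - i := fun i => by omega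
    simp only [hidx, shiftCoeff_succ, shiftCoeff_zero, Nat.sub_zero]
    have hq21 : q + 2 - 1 = q + 1 := rfl
    rw [hq21]
    have hrefl : ∑ j ∈ Finset.range (q + 1), ((j : ℂ) + 1) * c j * β (q + 1 - j) 1
        = ∑ i ∈ Finset.range (q + 1), (((q - i : ℕ) : ℂ) + 1) * c (q - i) * β (i + 1) 1 := by
      rw [← Finset.sum_range_reflect]
      refine Finset.sum_congr rfl fun i hi => ?_
      rw [Finset.mem_range] at hi
      have h1 : q + 1 - 1 - i = q - i := by omega
      have h2 : q + 1 - (q - i) = i + 1 := by omega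
      rw [h1, h2]
    rw [hrefl]
    have hneg : ∑ x ∈ Finset.range (q + 1),
          -β (x + 1) 1 * (((q - x : ℕ) : ℂ) + 1) * c (q - x)
        = -∑ i ∈ Finset.range (q + 1), (((q - i : ℕ) : ℂ) + 1) * c (q - i) * β (i + 1) 1 := by
      rw [← Finset.sum_neg_distrib]
      exact Finset.sum_congr rfl fun x _ => by ring
    rw [hneg]
    ring
end

section
/- Let B_n ∈ ℤ[c_1, ..., c_n] (n ≥ 0, B_0 = 1) be the coefficients of the multiplicative inverse of the formal power series f'(z) = 1 + ∑_{n≥1} (n+1) c_n z^n, i.e. 1/f'(z) = 1 + ∑_{n≥1} B_n z^n (so B_1 = −2c_1, B_2 = 4c_1² − 3c_2, ...). Then for every k ≥ 1 and every polynomial P in the variables c_1, ..., c_N, ∂P/∂c_k = ∑_{n≥0} B_n · (L_{k+n} P), where the sum is finite because L_{k+n} P = 0 once k + n > N; in particular the coefficients B_n do not depend on k. -/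
open MvPolynomial

/-- The operator `L_k = ∂/∂c_k + ∑_{n≥1} (n+1) c_n ∂/∂c_{n+k}`, truncated at `n ≤ N`, acting on
the polynomial ring `ℂ[c_1, c_2, …]` (the variable `X n` stands for `c_n`, `n ≥ 1`).  On a
polynomial whose variables lie among `c_1, …, c_N` with indices `n + k > N` contributing `0`,
this truncation agrees with the full (formally infinite) operator. -/
noncomputable def Lop (N k : ℕ) (Q : MvPolynomial ℕ ℂ) : MvPolynomial ℕ ℂ :=
  pderiv k Q + ∑ n ∈ Finset.Icc 1 N, ((n : MvPolynomial ℕ ℂ) + 1) * X n * pderiv (n + k) Q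

lemma double_sum_aux {M : Type*} [AddCommMonoid M] (N : ℕ) (F : ℕ → ℕ → M)
    (hF : ∀ n m, N < n + m → F n m = 0) :
    ∑ m ∈ Finset.range (N + 1), ∑ n ∈ Finset.range (N + 1), F n m
      = ∑ t ∈ Finset.range (N + 1), ∑ p ∈ Finset.HasAntidiagonal.antidiagonal t, F p.1 p.2 := by
  rw [Finset.sum_comm, ← Finset.sum_product']
  have hbi : (Finset.range (N + 1)).biUnion Finset.HasAntidiagonal.antidiagonal
      = (Finset.range (N + 1) ×ˢ Finset.range (N + 1)).filter (fun p => p.1 + p.2 ≤ N) := by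
    ext p
    simp only [Finset.mem_biUnion, Finset.mem_range, Finset.HasAntidiagonal.mem_antidiagonal,
      Finset.mem_filter, Finset.mem_product]
    constructor
    · rintro ⟨t, ht, hp⟩; omega
    · intro h
      exact ⟨p.1 + p.2, by omega, rfl⟩
  have hdisj : (↑(Finset.range (N + 1) : Finset ℕ) : Set ℕ).PairwiseDisjoint Finset.HasAntidiagonal.antidiagonal := by
    intro a _ b _ hab
    simp only [Finset.disjoint_left, Finset.HasAntidiagonal.mem_antidiagonal]
    intro p hp hp'
    exact hab (hp ▸ hp')
  rw [← Finset.sum_biUnion hdisj, hbi, Finset.sum_filter_of_ne]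
  intro p _ hne
  by_contra h
  exact hne (hF p.1 p.2 (by omega))

/-- Let `B_n` (with `B_0 = 1`) be the coefficients of the multiplicative inverse
of the formal power series `f'(z) = 1 + ∑_{n≥1} (n+1) c_n z^n`.  Then for every `k ≥ 1` and every
polynomial `P` in the variables `c_1, …, c_N`,
`∂P/∂c_k = ∑_{n} B_n · (L_{k+n} P)`, the sum being finite since `L_{k+n} P = 0` once `k + n > N`
(so that summing over `n ≤ N` suffices); in particular the `B_n` do not depend on `k`. -/
theorem stmt_11 (B : ℕ → MvPolynomial ℕ ℂ) (hB0 : B 0 = 1)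
    (hB : (PowerSeries.mk fun n => if n = 0 then 1 else ((n : MvPolynomial ℕ ℂ) + 1) * X n) *
        PowerSeries.mk B = 1) :
    ∀ (N : ℕ) (P : MvPolynomial ℕ ℂ), P.vars ⊆ Finset.Icc 1 N →
      ∀ k : ℕ, 1 ≤ k →
        pderiv k P = ∑ m ∈ Finset.range (N + 1), B m * Lop N (k + m) P := by
  intro N P hP k hk
  symm
  set a : ℕ → MvPolynomial ℕ ℂ := fun n => if n = 0 then 1 else ((n : MvPolynomial ℕ ℂ) + 1) * X n
    with ha
  have hDzero : ∀ j : ℕ, N < j → pderiv j P = 0 := by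
    intro j hj
    apply pderiv_eq_zero_of_notMem_vars
    intro h
    have := hP h
    rw [Finset.mem_Icc] at this
    omega
  have hLop : ∀ j : ℕ, Lop N j P = ∑ n ∈ Finset.range (N + 1), a n * pderiv (n + j) P := by
    intro j
    have h0 : (0 : ℕ) ∉ Finset.Icc 1 N := by simp
    have hins : Finset.range (N + 1) = insert 0 (Finset.Icc 1 N) := by
      ext x
      simp only [Finset.mem_range, Finset.mem_insert, Finset.mem_Icc]
      omega
    rw [hins, Finset.sum_insert h0]
    simp only [ha]
    rw [Lop]
    congr 1
    · simp
    · apply Finset.sum_congr rfl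
      intro n hn
      rw [Finset.mem_Icc] at hn
      have : n ≠ 0 := by omega
      simp [this]
  calc ∑ m ∈ Finset.range (N + 1), B m * Lop N (k + m) P
      = ∑ m ∈ Finset.range (N + 1), ∑ n ∈ Finset.range (N + 1),
          a n * B m * pderiv (n + m + k) P := by
        apply Finset.sum_congr rfl
        intro m _
        rw [hLop, Finset.mul_sum]
        apply Finset.sum_congr rfl
        intro n _
        have : n + (k + m) = n + m + k := by omega
        rw [this]; ring
    _ = ∑ t ∈ Finset.range (N + 1), ∑ p ∈ Finset.HasAntidiagonal.antidiagonal t,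
          a p.1 * B p.2 * pderiv (p.1 + p.2 + k) P := by
        apply double_sum_aux
        intro n m hnm
        rw [hDzero (n + m + k) (by omega), mul_zero]
    _ = ∑ t ∈ Finset.range (N + 1),
          (∑ p ∈ Finset.HasAntidiagonal.antidiagonal t, a p.1 * B p.2) * pderiv (t + k) P := by
        apply Finset.sum_congr rfl
        intro t _
        rw [Finset.sum_mul]
        apply Finset.sum_congr rfl
        intro p hp
        rw [Finset.HasAntidiagonal.mem_antidiagonal] at hp
        rw [hp]
    _ = ∑ t ∈ Finset.range (N + 1),
          (if t = 0 then (1 : MvPolynomial ℕ ℂ) else 0) * pderiv (t + k) P := by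
        apply Finset.sum_congr rfl
        intro t _
        congr 1
        have : ∑ p ∈ Finset.HasAntidiagonal.antidiagonal t, a p.1 * B p.2
            = PowerSeries.coeff t ((PowerSeries.mk a) * PowerSeries.mk B) := by
          rw [PowerSeries.coeff_mul]
          simp [PowerSeries.coeff_mk]
        rw [this, hB, PowerSeries.coeff_one]
    _ = pderiv k P := by
        rw [Finset.sum_eq_single 0]
        · simp
        · intro t _ ht; simp [ht]
        · intro h; simp at h
end
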